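/- arXiv:0910.0610 — 4 statements merged into one kernel-verified Lean document; each statement's English description precedes it below -/
import Mathlib

section
/- Let X be a Euclidean (real inner product) space and let f : X → ℝ ∪ {∞} be a closed (lower semicontinuous) convex function, and let β > 0. Then f is β-strongly convex with respect to a norm ‖·‖ on X if and only if its Fenchel conjugate f* is (1/β)-strongly smooth with respect to the dual norm ‖·‖*. -/
open scoped BigOperators
open RealInnerProductSpace

/-- `N` is a norm on the real vector space `V`. -/
def IsNormOn {V : Type*} [AddCommGroup V] [Module ℝ V] (N : V → ℝ) : Prop :=
  (∀ x, 0 ≤ N x) ∧ (∀ x, N x = 0 → x = 0) ∧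
    (∀ (c : ℝ) (x : V), N (c • x) = |c| * N x) ∧ ∀ x y, N (x + y) ≤ N x + N y

variable {X : Type*} [NormedAddCommGroup X] [InnerProductSpace ℝ X]

/-- The dual norm of `N` with respect to the inner product:
`‖y‖⋆ = sup { ⟪x, y⟫ : N x ≤ 1 }`. -/
noncomputable def dualNorm (N : X → ℝ) (y : X) : ℝ :=
  sSup {r : ℝ | ∃ x : X, N x ≤ 1 ∧ r = ⟪x, y⟫}

/-- The Fenchel conjugate `f⋆(y) = sup_x (⟪x, y⟫ - f x)` of an extended-real-valued `f`. -/
noncomputable def fenchelConj (f : X → EReal) (y : X) : EReal :=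
  ⨆ x : X, ((⟪x, y⟫ : ℝ) : EReal) - f x

/-- `f` is convex (with values in `ℝ ∪ {∞}`). -/
def ERealConvexOn (f : X → EReal) : Prop :=
  ∀ (x y : X) (α : ℝ), 0 ≤ α → α ≤ 1 →
    f (α • x + (1 - α) • y) ≤ (α : EReal) * f x + ((1 - α : ℝ) : EReal) * f y

/-- `f` is `β`-strongly convex w.r.t. the norm `N`: for all `x, y` in the relative interior
of the domain of `f` and all `α ∈ (0,1)`,
`f(αx + (1-α)y) ≤ α f x + (1-α) f y - (β/2) α (1-α) N(x-y)²`. -/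
def EStrongConvexOn (N : X → ℝ) (β : ℝ) (f : X → EReal) : Prop :=
  ∀ x ∈ intrinsicInterior ℝ {z : X | f z ≠ ⊤}, ∀ y ∈ intrinsicInterior ℝ {z : X | f z ≠ ⊤},
    ∀ α : ℝ, 0 < α → α < 1 →
      f (α • x + (1 - α) • y) ≤
        (α : EReal) * f x + ((1 - α : ℝ) : EReal) * f y
          - ((β / 2 * α * (1 - α) * N (x - y) ^ 2 : ℝ) : EReal)

/-- `g` is `β`-strongly smooth w.r.t. a norm `Nd`: `g` is everywhere differentiable and
`g(x+y) ≤ g x + ⟪∇g x, y⟫ + (β/2) Nd(y)²`. -/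
def StronglySmoothOn [CompleteSpace X] (Nd : X → ℝ) (β : ℝ) (g : X → ℝ) : Prop :=
  Differentiable ℝ g ∧
    ∀ x y : X, g (x + y) ≤ g x + ⟪gradient g x, y⟫ + β / 2 * Nd y ^ 2

-- Part A : basic facts about the norm N and the dual norm
section PartA
variable {X : Type*} [NormedAddCommGroup X] [InnerProductSpace ℝ X]
  {N : X → ℝ}

theorem IsNormOn.zero (hN : IsNormOn N) : N 0 = 0 := by
  have := hN.2.2.1 0 0
  simpa using this

theorem IsNormOn.neg (hN : IsNormOn N) (x : X) : N (-x) = N x := by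
  have := hN.2.2.1 (-1) x
  simpa using this

theorem IsNormOn.sum_le (hN : IsNormOn N) {ι : Type*} (s : Finset ι) (v : ι → X) :
    N (∑ i ∈ s, v i) ≤ ∑ i ∈ s, N (v i) := by
  classical
  induction s using Finset.induction with
  | empty => simp [hN.zero]
  | insert _ _ hnot ih =>
    rename_i a s
    rw [Finset.sum_insert hnot, Finset.sum_insert hnot]
    exact le_trans (hN.2.2.2 _ _) (by linarith)

/-- upper bound `N x ≤ C ‖x‖`. -/
theorem IsNormOn.exists_upper [FiniteDimensional ℝ X] (hN : IsNormOn N) :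
    ∃ C : ℝ, 0 < C ∧ ∀ x, N x ≤ C * ‖x‖ := by
  classical
  set b := Module.finBasis ℝ X with hb
  set ι := Fin (Module.finrank ℝ X)
  let ℓ : ι → X →L[ℝ] ℝ := fun i => LinearMap.toContinuousLinearMap (b.coord i)
  have hnn : (0:ℝ) ≤ ∑ i, ‖ℓ i‖ * N (b i) :=
    Finset.sum_nonneg fun i _ => mul_nonneg (norm_nonneg _) (hN.1 _)
  refine ⟨∑ i, ‖ℓ i‖ * N (b i) + 1, by linarith, fun x => ?_⟩
  have hx : x = ∑ i, b.repr x i • b i := (b.sum_repr x).symm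
  calc N x = N (∑ i, b.repr x i • b i) := by rw [← hx]
    _ ≤ ∑ i, N (b.repr x i • b i) := hN.sum_le _ _
    _ = ∑ i, |b.repr x i| * N (b i) := by simp [hN.2.2.1]
    _ ≤ ∑ i, (‖ℓ i‖ * ‖x‖) * N (b i) := by
        refine Finset.sum_le_sum fun i _ => ?_
        have h1 : |b.repr x i| = ‖(ℓ i) x‖ := by
          simp [ℓ, Real.norm_eq_abs]
        rw [h1]
        exact mul_le_mul_of_nonneg_right ((ℓ i).le_opNorm x) (hN.1 _)
    _ = (∑ i, ‖ℓ i‖ * N (b i)) * ‖x‖ := by rw [Finset.sum_mul]; congr 1; ext i; ring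
    _ ≤ (∑ i, ‖ℓ i‖ * N (b i) + 1) * ‖x‖ := by
        have : (0:ℝ) ≤ ‖x‖ := norm_nonneg x
        nlinarith

theorem IsNormOn.continuous [FiniteDimensional ℝ X] (hN : IsNormOn N) : Continuous N := by
  obtain ⟨C, hC, hCle⟩ := hN.exists_upper
  have lip : LipschitzWith (Real.toNNReal C) N := by
    refine LipschitzWith.of_dist_le_mul fun x y => ?_
    have h1 : N x ≤ N (x - y) + N y := by
      have := hN.2.2.2 (x - y) y; simpa using this
    have h2 : N y ≤ N (x - y) + N x := by
      have h := hN.2.2.2 (y - x) x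
      have e1 : y - x + x = y := by abel
      have e2 : N (y - x) = N (x - y) := by
        rw [← hN.neg (x - y), neg_sub]
      rw [e1, e2] at h
      exact h
    have h3 : N (x - y) ≤ C * ‖x - y‖ := hCle _
    rw [Real.dist_eq, Real.coe_toNNReal _ hC.le, dist_eq_norm]
    rw [abs_le]
    constructor <;> linarith
  exact lip.continuous

theorem IsNormOn.exists_lower [FiniteDimensional ℝ X] (hN : IsNormOn N) :
    ∃ m : ℝ, 0 < m ∧ ∀ x, m * ‖x‖ ≤ N x := by
  rcases subsingleton_or_nontrivial X with hX | hX
  · refine ⟨1, one_pos, fun x => ?_⟩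
    have : x = 0 := Subsingleton.elim x 0
    simp [this, hN.zero]
  · have hsph : (Metric.sphere (0:X) 1).Nonempty := NormedSpace.sphere_nonempty.2 zero_le_one
    obtain ⟨z, hz, hzmin⟩ := (isCompact_sphere (0:X) 1).exists_isMinOn hsph
      hN.continuous.continuousOn
    have hz1 : ‖z‖ = 1 := by simpa using hz
    have hzne : z ≠ 0 := by intro h; rw [h] at hz1; simp at hz1
    have hm : 0 < N z := by
      rcases lt_or_eq_of_le (hN.1 z) with h | h
      · exact h
      · exact absurd (hN.2.1 z h.symm) hzne
    refine ⟨N z, hm, fun x => ?_⟩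
    rcases eq_or_ne x 0 with rfl | hx
    · simp [hN.zero]
    · have hxn : (0:ℝ) < ‖x‖ := norm_pos_iff.2 hx
      have hunit : (‖x‖⁻¹ • x) ∈ Metric.sphere (0:X) 1 := by
        simp [norm_smul, abs_of_pos (inv_pos.2 hxn), inv_mul_cancel₀ hxn.ne']
      have := hzmin hunit
      have heq : N x = ‖x‖ * N (‖x‖⁻¹ • x) := by
        have := hN.2.2.1 ‖x‖ (‖x‖⁻¹ • x)
        rw [smul_smul, mul_inv_cancel₀ hxn.ne', one_smul] at this
        rw [this, abs_of_pos hxn]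
      rw [heq]
      calc N z * ‖x‖ ≤ N (‖x‖⁻¹ • x) * ‖x‖ := by
            exact mul_le_mul_of_nonneg_right this (norm_nonneg x)
        _ = ‖x‖ * N (‖x‖⁻¹ • x) := mul_comm _ _

end PartA

-- Part A2 : dual norm facts
section PartA2
set_option linter.unusedSectionVars false
variable {X : Type*} [NormedAddCommGroup X] [InnerProductSpace ℝ X]
  [FiniteDimensional ℝ X] {N : X → ℝ}

theorem dualNorm_set_nonempty (hN : IsNormOn N) (y : X) :
    (0:ℝ) ∈ {r : ℝ | ∃ x : X, N x ≤ 1 ∧ r = ⟪x, y⟫} :=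
  ⟨0, by simp [hN.zero], by simp⟩

theorem dualNorm_set_bddAbove (hN : IsNormOn N) (y : X) :
    BddAbove {r : ℝ | ∃ x : X, N x ≤ 1 ∧ r = ⟪x, y⟫} := by
  obtain ⟨m, hm, hml⟩ := hN.exists_lower
  refine ⟨(1/m) * ‖y‖, fun r hr => ?_⟩
  obtain ⟨x, hx1, rfl⟩ := hr
  have hxle : ‖x‖ ≤ 1/m := by
    have h := hml x
    rw [le_div_iff₀ hm]
    nlinarith
  calc ⟪x, y⟫ ≤ ‖x‖ * ‖y‖ := real_inner_le_norm x y
    _ ≤ (1/m) * ‖y‖ := mul_le_mul_of_nonneg_right hxle (norm_nonneg _)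

theorem dualNorm_nonneg (hN : IsNormOn N) (y : X) : 0 ≤ dualNorm N y :=
  le_csSup (dualNorm_set_bddAbove hN y) (dualNorm_set_nonempty hN y)

theorem inner_le_dualNorm (hN : IsNormOn N) (x y : X) : ⟪x, y⟫ ≤ N x * dualNorm N y := by
  rcases eq_or_lt_of_le (hN.1 x) with h | h
  · have hx0 : x = 0 := hN.2.1 x h.symm
    simp [hx0, hN.zero, dualNorm_nonneg hN y]
  · have hmem : ⟪(N x)⁻¹ • x, y⟫ ∈ {r : ℝ | ∃ x : X, N x ≤ 1 ∧ r = ⟪x, y⟫} := by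
      refine ⟨(N x)⁻¹ • x, ?_, rfl⟩
      rw [hN.2.2.1, abs_of_pos (inv_pos.2 h), inv_mul_cancel₀ h.ne']
    have hle : ⟪(N x)⁻¹ • x, y⟫ ≤ dualNorm N y :=
      le_csSup (dualNorm_set_bddAbove hN y) hmem
    rw [real_inner_smul_left] at hle
    calc ⟪x, y⟫ = N x * ((N x)⁻¹ * ⟪x, y⟫) := by field_simp
      _ ≤ N x * dualNorm N y := mul_le_mul_of_nonneg_left hle (hN.1 x)

theorem dualNorm_smul_le (hN : IsNormOn N) {c : ℝ} (hc : 0 ≤ c) (y : X) :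
    dualNorm N (c • y) ≤ c * dualNorm N y := by
  refine csSup_le ⟨0, dualNorm_set_nonempty hN _⟩ fun r hr => ?_
  obtain ⟨x, hx1, rfl⟩ := hr
  have h1 : ⟪x, y⟫ ≤ dualNorm N y := le_csSup (dualNorm_set_bddAbove hN y) ⟨x, hx1, rfl⟩
  rw [real_inner_smul_right]
  exact mul_le_mul_of_nonneg_left h1 hc

theorem dualNorm_exists_upper (hN : IsNormOn N) :
    ∃ K : ℝ, 0 < K ∧ ∀ y, dualNorm N y ≤ K * ‖y‖ := by
  obtain ⟨m, hm, hml⟩ := hN.exists_lower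
  refine ⟨1/m, by positivity, fun y => ?_⟩
  refine csSup_le ⟨0, dualNorm_set_nonempty hN _⟩ fun r hr => ?_
  obtain ⟨x, hx1, rfl⟩ := hr
  have hxle : ‖x‖ ≤ 1/m := by
    have h := hml x
    rw [le_div_iff₀ hm]
    nlinarith
  calc ⟪x, y⟫ ≤ ‖x‖ * ‖y‖ := real_inner_le_norm x y
    _ ≤ (1/m) * ‖y‖ := mul_le_mul_of_nonneg_right hxle (norm_nonneg _)

end PartA2

-- Part B : real-valued convexity facts
section PartB
set_option linter.unusedSectionVars false
variable {X : Type*} [NormedAddCommGroup X] [InnerProductSpace ℝ X] {f : X → EReal}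

theorem freal (hfbot : ∀ x, f x ≠ ⊥) {x : X} (hx : f x ≠ ⊤) :
    f x = ((f x).toReal : EReal) := (EReal.coe_toReal hx (hfbot x)).symm

theorem real_convex (hconv : ERealConvexOn f) (hfbot : ∀ x, f x ≠ ⊥) {x y : X}
    (hx : f x ≠ ⊤) (hy : f y ≠ ⊤) {α : ℝ} (h0 : 0 ≤ α) (h1 : α ≤ 1) :
    f (α • x + (1 - α) • y) ≠ ⊤ ∧
      (f (α • x + (1 - α) • y)).toReal ≤ α * (f x).toReal + (1 - α) * (f y).toReal := by
  have h := hconv x y α h0 h1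
  rw [freal hfbot hx, freal hfbot hy] at h
  have hco : (α : EReal) * ((f x).toReal : EReal) + ((1 - α : ℝ) : EReal) * ((f y).toReal : EReal)
      = ((α * (f x).toReal + (1 - α) * (f y).toReal : ℝ) : EReal) := by
    rw [← EReal.coe_mul, ← EReal.coe_mul, ← EReal.coe_add]
  rw [hco] at h
  have hne : f (α • x + (1 - α) • y) ≠ ⊤ := by
    intro htop
    rw [htop] at h
    exact (EReal.coe_lt_top _).not_ge h
  refine ⟨hne, ?_⟩
  rw [freal hfbot hne] at h
  exact_mod_cast h

end PartB

-- Part C : intrinsic interior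
section PartC
set_option linter.unusedSectionVars false
variable {X : Type*} [NormedAddCommGroup X] [InnerProductSpace ℝ X]

theorem mem_intrinsicInterior_iff' {s : Set X} {x : X} :
    x ∈ intrinsicInterior ℝ s ↔
      x ∈ s ∧ ∃ ε > 0, ∀ z ∈ affineSpan ℝ s, dist z x < ε → z ∈ s := by
  constructor
  · rintro ⟨y, hy, rfl⟩
    have hxs : (y : X) ∈ s := Set.mem_preimage.1 (interior_subset hy)
    refine ⟨hxs, ?_⟩
    have hnhds : ((↑) ⁻¹' s : Set (affineSpan ℝ s)) ∈ nhds y := mem_interior_iff_mem_nhds.1 hy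
    obtain ⟨ε, hε, hb⟩ := Metric.mem_nhds_iff.1 hnhds
    refine ⟨ε, hε, fun z hz hd => ?_⟩
    have : (⟨z, hz⟩ : affineSpan ℝ s) ∈ Metric.ball y ε := by
      rw [Metric.mem_ball, Subtype.dist_eq]
      exact hd
    exact hb this
  · rintro ⟨hxs, ε, hε, h⟩
    have hxspan : x ∈ affineSpan ℝ s := subset_affineSpan ℝ s hxs
    refine ⟨⟨x, hxspan⟩, ?_, rfl⟩
    rw [mem_interior_iff_mem_nhds, Metric.mem_nhds_iff]
    refine ⟨ε, hε, fun z hz => ?_⟩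
    rw [Metric.mem_ball, Subtype.dist_eq] at hz
    exact h z.1 z.2 hz

theorem combo_mem_intrinsicInterior {s : Set X} (hs : Convex ℝ s) {x y : X}
    (hx : x ∈ intrinsicInterior ℝ s) (hy : y ∈ s) {t : ℝ} (ht0 : 0 < t) (ht1 : t ≤ 1) :
    t • x + (1 - t) • y ∈ intrinsicInterior ℝ s := by
  rw [mem_intrinsicInterior_iff'] at hx ⊢
  obtain ⟨hxs, ε, hε, hball⟩ := hx
  have hws : t • x + (1 - t) • y ∈ s := hs hxs hy ht0.le (by linarith) (by ring)
  refine ⟨hws, t * ε, by positivity, fun z hz hd => ?_⟩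
  set w := t • x + (1 - t) • y with hw
  have hwspan : w ∈ affineSpan ℝ s := subset_affineSpan ℝ s hws
  have hdir : t⁻¹ • (z - w) ∈ (affineSpan ℝ s).direction := by
    refine Submodule.smul_mem _ _ ?_
    have := AffineSubspace.vsub_mem_direction hz hwspan
    simpa using this
  have huspan : t⁻¹ • (z - w) + x ∈ affineSpan ℝ s := by
    have := AffineSubspace.vadd_mem_of_mem_direction hdir (subset_affineSpan ℝ s hxs)
    simpa using this
  set u := t⁻¹ • (z - w) + x with hu
  have hdu : dist u x < ε := by
    rw [dist_eq_norm]
    have : u - x = t⁻¹ • (z - w) := by rw [hu]; abel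
    rw [this, norm_smul, Real.norm_eq_abs, abs_of_pos (inv_pos.2 ht0)]
    rw [dist_eq_norm] at hd
    calc t⁻¹ * ‖z - w‖ < t⁻¹ * (t * ε) := by
          exact mul_lt_mul_of_pos_left hd (inv_pos.2 ht0)
      _ = ε := by field_simp
  have hus : u ∈ s := hball u huspan hdu
  have hzeq : z = t • u + (1 - t) • y := by
    rw [hu, smul_add, smul_smul, mul_inv_cancel₀ ht0.ne', one_smul, hw]
    abel
  rw [hzeq]
  exact hs hus hy ht0.le (by linarith) (by ring)

end PartC

-- Part D : forward direction machinery
section PartD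
set_option linter.unusedSectionVars false
set_option maxHeartbeats 1000000
variable {X : Type*} [NormedAddCommGroup X] [InnerProductSpace ℝ X]
  [FiniteDimensional ℝ X] {N : X → ℝ} {β : ℝ} {f : X → EReal}

/-- minimum of a lower semicontinuous `EReal`-valued function on a compact set. -/
theorem lsc_exists_min_on_compact {ψ : X → EReal} (hψ : LowerSemicontinuous ψ)
    {K : Set X} (hK : IsCompact K) (hne : K.Nonempty) :
    ∃ x ∈ K, ∀ z ∈ K, ψ x ≤ ψ z := by
  classical
  set m := sInf (ψ '' K) with hm
  rcases eq_or_lt_of_le (le_top : m ≤ ⊤) with htop | hlt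
  · obtain ⟨x, hx⟩ := hne
    refine ⟨x, hx, fun z hz => ?_⟩
    have : m ≤ ψ z := sInf_le ⟨z, hz, rfl⟩
    rw [htop] at this
    have hz' : ψ z = ⊤ := top_le_iff.1 this
    rw [hz']; exact le_top
  · have hKc : IsClosed K := hK.isClosed
    set ι := {r : EReal // m < r} with hι
    have : Nonempty ι := ⟨⟨⊤, hlt⟩⟩
    set Z : ι → Set X := fun r => {x ∈ K | ψ x ≤ r.1} with hZ
    have hZc : ∀ i, IsCompact (Z i) := fun i => by
      have : Z i = K ∩ {x | ψ x ≤ i.1} := rfl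
      rw [this]
      exact hK.inter_right (hψ.isClosed_preimage _)
    have hZcl : ∀ i, IsClosed (Z i) := fun i => by
      have : Z i = K ∩ {x | ψ x ≤ i.1} := rfl
      rw [this]
      exact hKc.inter (hψ.isClosed_preimage _)
    have hZn : ∀ i, (Z i).Nonempty := by
      rintro ⟨r, hr⟩
      have : sInf (ψ '' K) < r := hr
      obtain ⟨v, ⟨x, hx, rfl⟩, hvr⟩ := sInf_lt_iff.1 this
      exact ⟨x, hx, hvr.le⟩
    have hZd : Directed (· ⊇ ·) Z := by
      rintro ⟨r1, hr1⟩ ⟨r2, hr2⟩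
      refine ⟨⟨min r1 r2, lt_min hr1 hr2⟩, ?_, ?_⟩
      · rintro x ⟨hxK, hxr⟩; exact ⟨hxK, hxr.trans (min_le_left _ _)⟩
      · rintro x ⟨hxK, hxr⟩; exact ⟨hxK, hxr.trans (min_le_right _ _)⟩
    obtain ⟨x, hx⟩ := IsCompact.nonempty_iInter_of_directed_nonempty_isCompact_isClosed
      Z hZd hZn hZc hZcl
    simp only [Set.mem_iInter] at hx
    have hxK : x ∈ K := (hx ⟨⊤, hlt⟩).1
    refine ⟨x, hxK, fun z hz => ?_⟩
    have hxm : ψ x ≤ m := by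
      refine le_of_forall_gt_imp_ge_of_dense fun r hr => ?_
      exact (hx ⟨r, hr⟩).2
    exact hxm.trans (sInf_le ⟨z, hz, rfl⟩)

/-- Extension of strong convexity from the intrinsic interior of the domain to the
whole domain. -/
theorem strong_convex_extend (hN : IsNormOn N) (hβ : 0 < β)
    (hfbot : ∀ x, f x ≠ ⊥) (hproper : ∃ x, f x ≠ ⊤)
    (hclosed : LowerSemicontinuous f) (hconv : ERealConvexOn f)
    (hsc : EStrongConvexOn N β f) :
    ∀ x, f x ≠ ⊤ → ∀ y, f y ≠ ⊤ → ∀ α : ℝ, 0 < α → α < 1 →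
      f (α • x + (1 - α) • y) ≠ ⊤ ∧
      (f (α • x + (1 - α) • y)).toReal ≤
        α * (f x).toReal + (1 - α) * (f y).toReal - β / 2 * α * (1 - α) * N (x - y) ^ 2 := by
  intro x hx y hy α hα0 hα1
  set D := {z : X | f z ≠ ⊤} with hD
  have hDconv : Convex ℝ D := by
    intro a ha b hb p q hp hq hpq
    have hq' : q = 1 - p := by linarith
    subst hq'
    exact (real_convex hconv hfbot ha hb hp (by linarith)).1
  have hDne : D.Nonempty := hproper
  obtain ⟨z, hzri⟩ := hDne.intrinsicInterior hDconv
  have hzD : z ∈ D := intrinsicInterior_subset hzri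
  set w := α • x + (1 - α) • y with hw
  set Fx := (f x).toReal
  set Fy := (f y).toReal
  set Fz := (f z).toReal
  set A := α * Fx + (1 - α) * Fy with hA
  set Q := N (x - y) ^ 2 with hQ
  set c := β / 2 * α * (1 - α) * Q with hc
  -- main step : f w ≤ ↑(A - c)
  have main : f w ≤ ((A - c : ℝ) : EReal) := by
    by_contra hcon
    rw [not_le] at hcon
    obtain ⟨r, hr1, hr2⟩ := EReal.exists_between_coe_real hcon
    set S : ℝ → ℝ := fun t =>
      t * Fz + (1 - t) * A - β / 2 * α * (1 - α) * (1 - t) ^ 2 * Q with hS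
    have hS0 : S 0 = A - c := by simp [hS, hc]
    have hStend : Filter.Tendsto S (nhds 0) (nhds (S 0)) := by
      apply Continuous.tendsto
      fun_prop
    have hSlt : ∀ᶠ t in nhdsWithin 0 (Set.Ioi (0:ℝ)), S t < r := by
      apply Filter.Eventually.filter_mono nhdsWithin_le_nhds
      apply hStend.eventually_lt_const
      rw [hS0]
      exact_mod_cast hr1
    have hctend : Filter.Tendsto (fun t : ℝ => t • z + (1 - t) • w)
        (nhdsWithin 0 (Set.Ioi (0:ℝ))) (nhds w) := by
      have hcont : Continuous (fun t : ℝ => t • z + (1 - t) • w) := by fun_prop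
      have h1 := hcont.tendsto 0
      refine Filter.Tendsto.mono_left ?_ nhdsWithin_le_nhds
      simpa using h1
    have hflt : ∀ᶠ t in nhdsWithin 0 (Set.Ioi (0:ℝ)),
        (r : EReal) < f (t • z + (1 - t) • w) :=
      hctend.eventually (hclosed w r hr2)
    have hIoo : ∀ᶠ t in nhdsWithin 0 (Set.Ioi (0:ℝ)), t ∈ Set.Ioo (0:ℝ) 1 :=
      Filter.eventually_of_mem (Ioo_mem_nhdsGT_of_mem (by norm_num : (0:ℝ) ∈ Set.Ico 0 1))
        (fun t ht => ht)
    obtain ⟨t, ⟨hSt, hft⟩, ht0, ht1⟩ := ((hSlt.and hflt).and hIoo).exists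
    -- derive the contradiction from strong convexity at interior points
    set xt := t • z + (1 - t) • x with hxt
    set yt := t • z + (1 - t) • y with hyt
    have hxtri : xt ∈ intrinsicInterior ℝ D :=
      combo_mem_intrinsicInterior hDconv hzri hx ht0 ht1.le
    have hytri : yt ∈ intrinsicInterior ℝ D :=
      combo_mem_intrinsicInterior hDconv hzri hy ht0 ht1.le
    have hxtD : xt ∈ D := intrinsicInterior_subset hxtri
    have hytD : yt ∈ D := intrinsicInterior_subset hytri
    have hmain := hsc xt hxtri yt hytri α hα0 hα1
    have hcombo : α • xt + (1 - α) • yt = t • z + (1 - t) • w := by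
      rw [hxt, hyt, hw]; module
    rw [hcombo] at hmain
    rw [freal hfbot hxtD, freal hfbot hytD] at hmain
    set Fxt := (f xt).toReal with hFxt
    set Fyt := (f yt).toReal with hFyt
    have hco : ((α : EReal) * (Fxt : EReal) + ((1 - α : ℝ) : EReal) * (Fyt : EReal)
        - ((β / 2 * α * (1 - α) * N (xt - yt) ^ 2 : ℝ) : EReal))
        = ((α * Fxt + (1 - α) * Fyt - β / 2 * α * (1 - α) * N (xt - yt) ^ 2 : ℝ) : EReal) := by
      rw [← EReal.coe_mul, ← EReal.coe_mul, ← EReal.coe_add, ← EReal.coe_sub]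
    rw [hco] at hmain
    have hxtb := (real_convex hconv hfbot (Set.mem_setOf.1 hzD) hx ht0.le ht1.le).2
    have hytb := (real_convex hconv hfbot (Set.mem_setOf.1 hzD) hy ht0.le ht1.le).2
    have hNxy : N (xt - yt) = (1 - t) * N (x - y) := by
      have hsub : xt - yt = (1 - t) • (x - y) := by rw [hxt, hyt]; module
      rw [hsub, hN.2.2.1, abs_of_pos (by linarith : (0:ℝ) < 1 - t)]
    have hRS : α * Fxt + (1 - α) * Fyt - β / 2 * α * (1 - α) * N (xt - yt) ^ 2 ≤ S t := by
      rw [hNxy]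
      simp only [hS, hA, hQ]
      have h1 : α * Fxt ≤ α * (t * Fz + (1 - t) * Fx) :=
        mul_le_mul_of_nonneg_left hxtb hα0.le
      have h2 : (1 - α) * Fyt ≤ (1 - α) * (t * Fz + (1 - t) * Fy) :=
        mul_le_mul_of_nonneg_left hytb (by linarith)
      nlinarith [sq_nonneg (N (x - y))]
    have hle2 : f (t • z + (1 - t) • w) ≤ ((S t : ℝ) : EReal) :=
      le_trans hmain (by exact_mod_cast hRS)
    have hlt2 : ((S t : ℝ) : EReal) < (r : EReal) := by exact_mod_cast hSt
    exact absurd (lt_trans hft (lt_of_le_of_lt hle2 hlt2)) (lt_irrefl _)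
  constructor
  · intro htop
    rw [htop] at main
    exact (EReal.coe_lt_top _).not_ge (le_trans le_top main)
  · have hne : f w ≠ ⊤ := by
      intro htop
      rw [htop] at main
      exact (EReal.coe_lt_top _).not_ge (le_trans le_top main)
    rw [freal hfbot hne] at main
    have := EReal.coe_le_coe_iff.1 main
    linarith [this]

end PartD

-- Part D2 : coercivity and existence of maximizers
section PartD2
set_option linter.unusedSectionVars false
set_option maxHeartbeats 1000000
variable {X : Type*} [NormedAddCommGroup X] [InnerProductSpace ℝ X]
  [FiniteDimensional ℝ X] {N : X → ℝ} {β : ℝ} {f : X → EReal}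

theorem coercive_bound (hN : IsNormOn N) (hβ : 0 < β)
    (hfbot : ∀ x, f x ≠ ⊥) (hproper : ∃ x, f x ≠ ⊤)
    (hclosed : LowerSemicontinuous f) (hconv : ERealConvexOn f)
    (hsc : EStrongConvexOn N β f) :
    ∃ x₀, f x₀ ≠ ⊤ ∧ ∃ δ : ℝ, 0 < δ ∧ ∀ x, f x ≠ ⊤ →
      (f x₀).toReal - (1 + N (x - x₀)) / δ + β / 4 * N (x - x₀) ^ 2 ≤ (f x).toReal := by
  obtain ⟨m, hm, hml⟩ := hN.exists_lower
  obtain ⟨x₀, hx₀⟩ := hproper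
  set Fx₀ := (f x₀).toReal with hFx₀
  have hlt : ((Fx₀ - 1 : ℝ) : EReal) < f x₀ := by
    rw [freal hfbot hx₀]
    exact_mod_cast (by linarith : Fx₀ - 1 < Fx₀)
  obtain ⟨ρ, hρ, hball⟩ := Metric.eventually_nhds_iff.1 (hclosed x₀ _ hlt)
  set δ := min (1/2 : ℝ) (m * ρ / 2) with hδ
  have hδ0 : 0 < δ := lt_min (by norm_num) (by positivity)
  have hδh : δ ≤ 1/2 := min_le_left _ _
  have hδρ : δ ≤ m * ρ / 2 := min_le_right _ _
  refine ⟨x₀, hx₀, δ, hδ0, fun x hx => ?_⟩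
  set n := N (x - x₀) with hn
  have hn0 : 0 ≤ n := hN.1 _
  set α := δ / (1 + n) with hα
  have hα0 : 0 < α := by positivity
  have hα12 : α ≤ 1/2 := by
    rw [hα, div_le_iff₀ (by linarith : (0:ℝ) < 1 + n)]
    nlinarith
  have hα1 : α < 1 := by linarith
  obtain ⟨hcD, hcle⟩ := strong_convex_extend hN hβ hfbot ⟨x₀, hx₀⟩ hclosed hconv hsc
    x hx x₀ hx₀ α hα0 hα1
  set cα := α • x + (1 - α) • x₀ with hcα
  have hdist : dist cα x₀ < ρ := by
    have hsub : cα - x₀ = α • (x - x₀) := by rw [hcα]; module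
    rw [dist_eq_norm, hsub, norm_smul, Real.norm_eq_abs, abs_of_pos hα0]
    have h1 : ‖x - x₀‖ ≤ n / m := by
      rw [le_div_iff₀ hm]
      have := hml (x - x₀); linarith
    have h2 : α * ‖x - x₀‖ ≤ α * (n / m) :=
      mul_le_mul_of_nonneg_left h1 hα0.le
    have h3 : α * (n / m) ≤ δ / m := by
      have hb : (0:ℝ) < 1 + n := by linarith
      rw [hα, div_mul_eq_mul_div, div_le_div_iff₀ hb hm]
      have he : δ * (n / m) * m = δ * n := by field_simp
      rw [he]
      nlinarith
    have h4 : δ / m < ρ := by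
      rw [div_lt_iff₀ hm]
      calc δ ≤ m * ρ / 2 := hδρ
        _ < m * ρ := by nlinarith
        _ = ρ * m := mul_comm _ _
    linarith
  have hflsc : ((Fx₀ - 1 : ℝ) : EReal) < f cα := hball hdist
  rw [freal hfbot hcD] at hflsc
  have hflsc' : Fx₀ - 1 < (f cα).toReal := EReal.coe_lt_coe_iff.1 hflsc
  -- combine
  have hkey : Fx₀ - 1 < α * (f x).toReal + (1 - α) * Fx₀ - β / 2 * α * (1 - α) * n ^ 2 :=
    lt_of_lt_of_le hflsc' hcle
  have hdiv : (1 : ℝ) / α = (1 + n) / δ := by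
    rw [hα, one_div_div]
  -- Fx ≥ Fx₀ - 1/α + β/2 (1-α) n²
  have hstep : (f x).toReal ≥ Fx₀ - 1/α + β/2 * (1-α) * n^2 := by
    have h5 : α * (f x).toReal > α * Fx₀ - 1 + β / 2 * α * (1 - α) * n ^ 2 := by linarith
    have h6 : α * (Fx₀ - 1/α + β/2 * (1-α) * n^2)
        = α * Fx₀ - 1 + β / 2 * α * (1 - α) * n ^ 2 := by
      field_simp
    nlinarith [h5, h6]
  have hfin : Fx₀ - (1 + n)/δ + β/4 * n^2 ≤ Fx₀ - 1/α + β/2 * (1-α) * n^2 := by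
    rw [hdiv]
    have : β/4 * n^2 ≤ β/2 * (1-α) * n^2 := by
      nlinarith [mul_nonneg (mul_nonneg hβ.le (by linarith : (0:ℝ) ≤ 1/4 - α/2)) (sq_nonneg n)]
    linarith
  linarith

end PartD2

-- Part D3 : existence of a maximizer in the Fenchel conjugate
section PartD3
set_option linter.unusedSectionVars false
set_option maxHeartbeats 1000000
variable {X : Type*} [NormedAddCommGroup X] [InnerProductSpace ℝ X]
  [FiniteDimensional ℝ X] {N : X → ℝ} {β : ℝ} {f : X → EReal}

theorem exists_conj_max (hN : IsNormOn N) (hβ : 0 < β)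
    (hfbot : ∀ x, f x ≠ ⊥) (hproper : ∃ x, f x ≠ ⊤)
    (hclosed : LowerSemicontinuous f) (hconv : ERealConvexOn f)
    (hsc : EStrongConvexOn N β f) (y : X) :
    ∃ x, f x ≠ ⊤ ∧ ∀ x' : X,
      ((⟪x', y⟫ : ℝ) : EReal) - f x' ≤ ((⟪x, y⟫ : ℝ) : EReal) - f x := by
  obtain ⟨x₀, hx₀, δ, hδ0, hbound⟩ :=
    coercive_bound hN hβ hfbot hproper hclosed hconv hsc
  obtain ⟨C, hC, hCle⟩ := hN.exists_upper
  obtain ⟨m, hm, hml⟩ := hN.exists_lower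
  set ψ : X → EReal := fun x => f x + ((-⟪x, y⟫ : ℝ) : EReal) with hψdef
  have hinncont : Continuous fun x : X => (-⟪x, y⟫ : ℝ) :=
    (continuous_id.inner continuous_const).neg
  have hψ : LowerSemicontinuous ψ := by
    refine LowerSemicontinuous.add' hclosed
      ((continuous_coe_real_ereal.comp hinncont).lowerSemicontinuous) fun x => ?_
    exact EReal.continuousAt_add (Or.inr (by simp)) (Or.inl (hfbot x))
  have hψreal : ∀ x, f x ≠ ⊤ → ψ x = (((f x).toReal - ⟪x, y⟫ : ℝ) : EReal) := by
    intro x hx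
    rw [hψdef]
    simp only
    rw [show ((f x).toReal - ⟪x, y⟫ : ℝ) = (f x).toReal + -⟪x, y⟫ from by ring,
      EReal.coe_add]
    conv_lhs => rw [freal hfbot hx]
  have hψtop : ∀ x, f x = ⊤ → ψ x = ⊤ := by
    intro x hx
    rw [hψdef]; simp only [hx]
    exact EReal.top_add_coe _
  -- radius
  set a := β / 4 * m ^ 2 with ha
  have ha0 : 0 < a := by positivity
  set b := ‖y‖ + C / δ with hb
  have hb0 : 0 ≤ b := by positivity
  set R := max 1 ((b + 1/δ + 1) / a) with hR
  have hR1 : (1:ℝ) ≤ R := le_max_left _ _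
  have hR0 : (0:ℝ) < R := by linarith
  have hfar : ∀ x, f x ≠ ⊤ → ‖x - x₀‖ > R →
      ⟪x, y⟫ - (f x).toReal < ⟪x₀, y⟫ - (f x₀).toReal := by
    intro x hx hu
    set u := ‖x - x₀‖ with hu'
    have hu1 : 1 ≤ u := le_trans hR1 hu.le
    have hu2 : (b + 1/δ + 1) / a ≤ u := le_trans (le_max_right _ _) hu.le
    have hau : b + 1/δ + 1 ≤ a * u := by
      rw [div_le_iff₀ ha0] at hu2; linarith [hu2]
    set n := N (x - x₀) with hn
    have hn1 : m * u ≤ n := hml _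
    have hn2 : n ≤ C * u := hCle _
    have hn0 : 0 ≤ n := hN.1 _
    have hkey := hbound x hx
    have hip : ⟪x, y⟫ - ⟪x₀, y⟫ ≤ u * ‖y‖ := by
      have h1 : ⟪x, y⟫ - ⟪x₀, y⟫ = ⟪x - x₀, y⟫ := by
        rw [inner_sub_left]
      rw [h1]
      exact le_trans (real_inner_le_norm _ _) le_rfl
    -- quadratic domination
    have hq1 : β / 4 * n ^ 2 ≥ a * u ^ 2 := by
      rw [ha]
      nlinarith [mul_le_mul hn1 hn1 (by positivity) hn0]
    have hq2 : (1 + n) / δ ≤ 1/δ + (C/δ) * u := by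
      rw [div_le_iff₀ hδ0]
      have : (1/δ + (C/δ) * u) * δ = 1 + C * u := by field_simp
      rw [this]
      linarith
    have hfinal : u * ‖y‖ + (1/δ + (C/δ) * u) - a * u ^ 2 < 0 := by
      have h2 : a * u ^ 2 = (a * u) * u := by ring
      have h3 : (a * u) * u ≥ (b + 1/δ + 1) * u := by nlinarith
      have h4 : (b + 1/δ + 1) * u ≥ b * u + 1/δ + 1 := by
        nlinarith [mul_nonneg (le_of_lt (one_div_pos.2 hδ0)) (by linarith : (0:ℝ) ≤ u - 1)]
      have h5 : u * ‖y‖ + (C/δ) * u = b * u := by rw [hb]; ring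
      linarith
    linarith
  -- compact minimization
  set K := Metric.closedBall x₀ R with hK
  have hKc : IsCompact K := isCompact_closedBall x₀ R
  have hKne : K.Nonempty := ⟨x₀, Metric.mem_closedBall_self hR0.le⟩
  obtain ⟨xs, hxsK, hxsmin⟩ := lsc_exists_min_on_compact hψ hKc hKne
  have hψx₀ := hψreal x₀ hx₀
  have hxsD : f xs ≠ ⊤ := by
    intro htop
    have h1 := hxsmin x₀ (Metric.mem_closedBall_self hR0.le)
    rw [hψtop xs htop, hψx₀] at h1
    exact (EReal.coe_lt_top _).not_ge (le_trans le_top h1)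
  have hpsi_all : ∀ x', ψ xs ≤ ψ x' := by
    intro x'
    by_cases hx'K : x' ∈ K
    · exact hxsmin x' hx'K
    · by_cases hx'D : f x' = ⊤
      · rw [hψtop x' hx'D]; exact le_top
      · have hdist : ‖x' - x₀‖ > R := by
          rw [hK, Metric.mem_closedBall, not_le, dist_eq_norm] at hx'K
          exact hx'K
        have h1 := hfar x' hx'D hdist
        have h2 := hxsmin x₀ (Metric.mem_closedBall_self hR0.le)
        have h3 : ψ x₀ ≤ ψ x' := by
          rw [hψx₀, hψreal x' hx'D]
          exact_mod_cast (by linarith :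
            (f x₀).toReal - ⟪x₀, y⟫ ≤ (f x').toReal - ⟪x', y⟫)
        exact le_trans h2 h3
  refine ⟨xs, hxsD, fun x' => ?_⟩
  by_cases hx'D : f x' = ⊤
  · rw [hx'D, EReal.sub_top]
    exact bot_le
  · have h1 := hpsi_all x'
    rw [hψreal x' hx'D, hψreal xs hxsD] at h1
    have h2 : (f xs).toReal - ⟪xs, y⟫ ≤ (f x').toReal - ⟪x', y⟫ := by exact_mod_cast h1
    rw [freal hfbot hx'D, freal hfbot hxsD, ← EReal.coe_sub, ← EReal.coe_sub]
    exact_mod_cast (by linarith : ⟪x', y⟫ - (f x').toReal ≤ ⟪xs, y⟫ - (f xs).toReal)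

end PartD3

-- Part D4 : the forward direction
section PartD4
set_option linter.unusedSectionVars false
set_option maxHeartbeats 1000000
variable {X : Type*} [NormedAddCommGroup X] [InnerProductSpace ℝ X]
  [FiniteDimensional ℝ X] {N : X → ℝ} {β : ℝ} {f : X → EReal}

theorem forward_direction (hN : IsNormOn N) (hβ : 0 < β)
    (hfbot : ∀ x, f x ≠ ⊥) (hproper : ∃ x, f x ≠ ⊤)
    (hclosed : LowerSemicontinuous f) (hconv : ERealConvexOn f)
    (hsc : EStrongConvexOn N β f) :
    ∃ g : X → ℝ, (∀ y, (g y : EReal) = fenchelConj f y) ∧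
      StronglySmoothOn (dualNorm N) (1 / β) g := by
  have hch := fun y => exists_conj_max hN hβ hfbot hproper hclosed hconv hsc y
  set xm : X → X := fun y => Classical.choose (hch y) with hxm
  have hsel : ∀ y, f (xm y) ≠ ⊤ ∧ ∀ x' : X,
      ((⟪x', y⟫ : ℝ) : EReal) - f x' ≤ ((⟪xm y, y⟫ : ℝ) : EReal) - f (xm y) :=
    fun y => Classical.choose_spec (hch y)
  set g : X → ℝ := fun y => ⟪xm y, y⟫ - (f (xm y)).toReal with hg
  have hval : ∀ y, ((⟪xm y, y⟫ : ℝ) : EReal) - f (xm y) = ((g y : ℝ) : EReal) := by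
    intro y
    conv_lhs => rw [freal hfbot (hsel y).1]
    rw [← EReal.coe_sub]
  have hgF : ∀ y, ((g y : ℝ) : EReal) = fenchelConj f y := by
    intro y
    apply le_antisymm
    · rw [← hval y, fenchelConj]
      exact le_iSup (fun x => ((⟪x, y⟫ : ℝ) : EReal) - f x) (xm y)
    · rw [fenchelConj]
      exact iSup_le fun x => le_of_le_of_eq ((hsel y).2 x) (hval y)
  -- first-order optimality with strong convexity
  have hfo : ∀ y x', f x' ≠ ⊤ →
      (f (xm y)).toReal + ⟪x' - xm y, y⟫ + β / 2 * N (x' - xm y) ^ 2 ≤ (f x').toReal := by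
    intro y x' hx'
    set x := xm y with hx_def
    have hxD : f x ≠ ⊤ := (hsel y).1
    set Q := N (x' - x) ^ 2 with hQ
    have hQ0 : 0 ≤ Q := sq_nonneg _
    set B := β / 2 * Q with hB
    have hB0 : 0 ≤ B := mul_nonneg (by positivity) hQ0
    set T := (f x').toReal - (f x).toReal - ⟪x' - x, y⟫ with hT
    have hstep : ∀ α : ℝ, 0 < α → α < 1 → β / 2 * (1 - α) * Q ≤ T := by
      intro α hα0 hα1
      obtain ⟨hcD, hcle⟩ := strong_convex_extend hN hβ hfbot hproper hclosed hconv hsc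
        x' hx' x hxD α hα0 hα1
      set cα := α • x' + (1 - α) • x with hcα
      have hmax := (hsel y).2 cα
      rw [hval y, freal hfbot hcD, ← EReal.coe_sub] at hmax
      have hmax' : ⟪cα, y⟫ - (f cα).toReal ≤ g y := EReal.coe_le_coe_iff.1 hmax
      have hinner : ⟪cα, y⟫ = ⟪x, y⟫ + α * ⟪x' - x, y⟫ := by
        rw [hcα, inner_add_left, real_inner_smul_left, real_inner_smul_left,
          inner_sub_left]
        ring
      have hgy : g y = ⟪x, y⟫ - (f x).toReal := rfl
      -- combine : F cα ≥ F x + α ⟪x'-x,y⟫ and F cα ≤ α F x' + (1-α) F x - β/2 α(1-α) Q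
      have h1 : (f x).toReal + α * ⟪x' - x, y⟫ ≤ (f cα).toReal := by
        rw [hgy] at hmax'
        rw [hinner] at hmax'
        linarith
      have h2 : (f cα).toReal ≤ α * (f x').toReal + (1 - α) * (f x).toReal
          - β / 2 * α * (1 - α) * Q := hcle
      have h3 : α * ⟪x' - x, y⟫ ≤ α * ((f x').toReal - (f x).toReal)
          - β / 2 * α * (1 - α) * Q := by linarith
      have h4 : α * (β / 2 * (1 - α) * Q) ≤ α * T := by
        rw [hT]; nlinarith [h3]
      exact le_of_mul_le_mul_left (by linarith [h4]) hα0
    have hT0 : 0 ≤ T := by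
      have := hstep (1/2) (by norm_num) (by norm_num)
      nlinarith
    have hfinal : B ≤ T := by
      by_contra hcon
      rw [not_le] at hcon
      have hBpos : 0 < B := lt_of_le_of_lt hT0 hcon
      set α₀ := (B - T) / (2 * B) with hα₀
      have hα₀0 : 0 < α₀ := div_pos (by linarith) (by linarith)
      have hα₀1 : α₀ < 1 := by
        rw [hα₀, div_lt_one (by linarith)]
        linarith
      have := hstep α₀ hα₀0 hα₀1
      have heq : β / 2 * (1 - α₀) * Q = B - α₀ * B := by rw [hB]; ring
      have heq2 : α₀ * B = (B - T) / 2 := by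
        rw [hα₀]; field_simp
      rw [heq, heq2] at this
      linarith
    rw [hT] at hfinal
    rw [hB] at hfinal
    linarith
  -- sandwich inequalities
  have hlow : ∀ y h : X, g y + ⟪xm y, h⟫ ≤ g (y + h) := by
    intro y h
    have h1 := (hsel (y + h)).2 (xm y)
    rw [hval (y + h), freal hfbot (hsel y).1, ← EReal.coe_sub] at h1
    have h2 : ⟪xm y, y + h⟫ - (f (xm y)).toReal ≤ g (y + h) := EReal.coe_le_coe_iff.1 h1
    have h3 : ⟪xm y, y + h⟫ = ⟪xm y, y⟫ + ⟪xm y, h⟫ := inner_add_right _ _ _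
    have hgy : g y = ⟪xm y, y⟫ - (f (xm y)).toReal := rfl
    rw [h3] at h2
    linarith
  have hup : ∀ y h : X, g (y + h) ≤ g y + ⟪xm y, h⟫ + 1 / (2 * β) * dualNorm N h ^ 2 := by
    intro y h
    set x := xm y
    set x' := xm (y + h)
    have hfo1 := hfo y x' (hsel (y + h)).1
    have hgyh : g (y + h) = ⟪x', y + h⟫ - (f x').toReal := rfl
    have hgy : g y = ⟪x, y⟫ - (f x).toReal := rfl
    have hsplit : ⟪x', y + h⟫ = ⟪x, y⟫ + ⟪x' - x, y⟫ + ⟪x, h⟫ + ⟪x' - x, h⟫ := by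
      rw [inner_add_right, inner_sub_left, inner_sub_left]
      ring
    have hpair : ⟪x' - x, h⟫ ≤ N (x' - x) * dualNorm N h := inner_le_dualNorm hN _ _
    have hyoung : N (x' - x) * dualNorm N h - β / 2 * N (x' - x) ^ 2
        ≤ 1 / (2 * β) * dualNorm N h ^ 2 := by
      have hkey : 1 / (2 * β) * dualNorm N h ^ 2 -
          (N (x' - x) * dualNorm N h - β / 2 * N (x' - x) ^ 2)
          = 1 / (2 * β) * (dualNorm N h - β * N (x' - x)) ^ 2 := by
        field_simp; ring
      have hpos : 0 ≤ 1 / (2 * β) * (dualNorm N h - β * N (x' - x)) ^ 2 :=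
        mul_nonneg (by positivity) (sq_nonneg _)
      linarith
    rw [hgyh, hgy, hsplit]
    linarith
  -- gradient
  obtain ⟨Kd, hKd, hKdle⟩ := dualNorm_exists_upper hN
  have hasgrad : ∀ y, HasGradientAt g (xm y) y := by
    intro y
    rw [hasGradientAt_iff_isLittleO, Asymptotics.isLittleO_iff]
    intro c hc
    have hK'0 : (0:ℝ) < 1 / (2 * β) * Kd ^ 2 + 1 := by positivity
    rw [Metric.eventually_nhds_iff]
    refine ⟨c / (1 / (2 * β) * Kd ^ 2 + 1), div_pos hc hK'0, fun x' hx' => ?_⟩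
    have hx'y : y + (x' - y) = x' := by abel
    have herr1 : 0 ≤ g x' - g y - ⟪xm y, x' - y⟫ := by
      have h0 := hlow y (x' - y); rw [hx'y] at h0; linarith
    have herr2 : g x' - g y - ⟪xm y, x' - y⟫ ≤ 1 / (2 * β) * dualNorm N (x' - y) ^ 2 := by
      have h0 := hup y (x' - y); rw [hx'y] at h0; linarith
    have hNd : dualNorm N (x' - y) ≤ Kd * ‖x' - y‖ := hKdle _
    have hNd0 : 0 ≤ dualNorm N (x' - y) := dualNorm_nonneg hN _
    have hbound : g x' - g y - ⟪xm y, x' - y⟫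
        ≤ (1 / (2 * β) * Kd ^ 2 + 1) * ‖x' - y‖ * ‖x' - y‖ := by
      have h1 : dualNorm N (x' - y) ^ 2 ≤ Kd ^ 2 * ‖x' - y‖ ^ 2 := by
        nlinarith [norm_nonneg (x' - y)]
      have h2 : 1 / (2 * β) * dualNorm N (x' - y) ^ 2
          ≤ 1 / (2 * β) * (Kd ^ 2 * ‖x' - y‖ ^ 2) :=
        mul_le_mul_of_nonneg_left h1 (by positivity)
      nlinarith [norm_nonneg (x' - y), sq_nonneg ‖x' - y‖]
    have hdist : ‖x' - y‖ < c / (1 / (2 * β) * Kd ^ 2 + 1) := by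
      rw [← dist_eq_norm]; exact hx'
    have h5 : (1 / (2 * β) * Kd ^ 2 + 1) * ‖x' - y‖ ≤ c := by
      rw [lt_div_iff₀ hK'0] at hdist
      nlinarith
    have hfin : ‖g x' - g y - ⟪xm y, x' - y⟫‖ ≤ c * ‖x' - y‖ := by
      rw [Real.norm_eq_abs, abs_of_nonneg herr1]
      calc g x' - g y - ⟪xm y, x' - y⟫
          ≤ (1 / (2 * β) * Kd ^ 2 + 1) * ‖x' - y‖ * ‖x' - y‖ := hbound
        _ ≤ c * ‖x' - y‖ := by nlinarith [norm_nonneg (x' - y)]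
    simpa using hfin
  have hdiff : Differentiable ℝ g := fun y => (hasgrad y).differentiableAt
  have hgrad : ∀ y, gradient g y = xm y := fun y => (hasgrad y).gradient
  refine ⟨g, hgF, hdiff, fun u v => ?_⟩
  rw [hgrad u]
  have := hup u v
  have heq : 1 / β / 2 = 1 / (2 * β) := by ring
  rw [heq]
  linarith
end PartD4

-- Part E1 : existence of support functionals for N
section PartE1
set_option linter.unusedSectionVars false
set_option maxHeartbeats 1000000
variable {X : Type*} [NormedAddCommGroup X] [InnerProductSpace ℝ X]
  [FiniteDimensional ℝ X] {N : X → ℝ}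

theorem exists_support_functional (hN : IsNormOn N) (u : X) :
    ∃ z : X, (∀ x, ⟪x, z⟫ ≤ N x) ∧ ⟪u, z⟫ = N u := by
  classical
  set s : Set (X × ℝ) := {p | N p.1 < p.2} with hs
  have hsopen : IsOpen s :=
    isOpen_lt (hN.continuous.comp continuous_fst) continuous_snd
  have hsconv : Convex ℝ s := by
    rintro p hp q hq a b ha hb hab
    simp only [hs, Set.mem_setOf_eq] at hp hq ⊢
    have h1 : N (a • p.1 + b • q.1) ≤ a * N p.1 + b * N q.1 := by
      calc N (a • p.1 + b • q.1) ≤ N (a • p.1) + N (b • q.1) := hN.2.2.2 _ _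
        _ = a * N p.1 + b * N q.1 := by
            rw [hN.2.2.1, hN.2.2.1, abs_of_nonneg ha, abs_of_nonneg hb]
    have h2 : a * N p.1 + b * N q.1 < a * p.2 + b * q.2 := by
      rcases eq_or_lt_of_le ha with rfl | ha'
      · have hb1 : b = 1 := by linarith
        simp only [zero_mul, zero_add, hb1, one_mul]
        exact hq
      · have h3 : a * N p.1 < a * p.2 := mul_lt_mul_of_pos_left hp ha'
        have h4 : b * N q.1 ≤ b * q.2 := mul_le_mul_of_nonneg_left hq.le hb
        linarith
    exact lt_of_le_of_lt h1 h2
  have hnot : (u, N u) ∉ s := by simp [hs]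
  obtain ⟨ℓ, hℓ⟩ := geometric_hahn_banach_open_point hsconv hsopen hnot
  set σ := ℓ (0, 1) with hσ
  set φ : X → ℝ := fun x => ℓ (x, 0) with hφ
  have hdecomp : ∀ (x : X) (t : ℝ), ℓ (x, t) = φ x + t * σ := by
    intro x t
    have : (x, t) = (x, (0:ℝ)) + t • ((0:X), (1:ℝ)) := by
      simp [Prod.ext_iff]
    rw [this, map_add, map_smul]
    simp [hφ, hσ, smul_eq_mul]
  have hsep : ∀ (x : X) (t : ℝ), N x < t → φ x + t * σ < φ u + N u * σ := by
    intro x t ht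
    have := hℓ (x, t) ht
    rwa [hdecomp, hdecomp] at this
  set c₀ := φ u + N u * σ with hc₀
  have hφ0 : φ 0 = 0 := by
    have : ((0:X), (0:ℝ)) = (0 : X × ℝ) := rfl
    simp [hφ, this]
  have hσ0 : σ ≤ 0 := by
    by_contra hσpos
    rw [not_le] at hσpos
    set t := max 1 (c₀ / σ) with ht
    have ht1 : (1:ℝ) ≤ t := le_max_left _ _
    have htc : c₀ / σ ≤ t := le_max_right _ _
    have htpos : N (0:X) < t := by rw [hN.zero]; linarith
    have := hsep 0 t htpos
    rw [hφ0] at this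
    have h2 : c₀ ≤ t * σ := by
      rw [div_le_iff₀ hσpos] at htc
      linarith
    linarith
  have hσne : σ ≠ 0 := by
    intro hσz
    have h1 := hsep u (N u + 1) (by linarith)
    rw [hc₀, hσz] at h1
    simp at h1
  have hσneg : σ < 0 := lt_of_le_of_ne hσ0 hσne
  have hσpos' : (0:ℝ) < -σ := by linarith
  -- limit t → N x
  have hkey : ∀ x : X, φ x + N x * σ ≤ c₀ := by
    intro x
    by_contra hcon
    rw [not_le] at hcon
    set ε := (φ x + N x * σ - c₀) / (-σ) with hε
    have hε0 : 0 < ε := div_pos (by linarith) (by linarith)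
    have := hsep x (N x + ε) (by linarith)
    have heq : φ x + (N x + ε) * σ = c₀ := by
      rw [hε]; field_simp; ring
    linarith
  -- the Riesz representative
  set φL : X →L[ℝ] ℝ := ℓ.comp (ContinuousLinearMap.inl ℝ X ℝ) with hφL
  have hφLeq : ∀ x, φL x = φ x := by
    intro x; simp [hφL, hφ]
  set z := (InnerProductSpace.toDual ℝ X).symm ((-σ)⁻¹ • φL) with hz
  have hzx : ∀ x, ⟪x, z⟫ = (-σ)⁻¹ * φ x := by
    intro x
    rw [real_inner_comm]
    rw [hz, InnerProductSpace.toDual_symm_apply]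
    simp [hφLeq, smul_eq_mul]
  have h2u : φ (u + u) = 2 * φ u := by
    rw [hφ]
    simp only
    have he : ((u + u : X), (0:ℝ)) = ((u, (0:ℝ)) + (u, (0:ℝ)) : X × ℝ) := by
      simp [Prod.ext_iff]
    rw [he, map_add]
    ring
  have hN2u : N (u + u) = 2 * N u := by
    have he : u + u = (2:ℝ) • u := by
      rw [two_smul]
    rw [he, hN.2.2.1]
    norm_num
  have hA := hkey (u + u)
  have hB := hkey 0
  rw [h2u, hN2u] at hA
  rw [hφ0, hN.zero] at hB
  rw [hc₀] at hA hB
  have hc0eq : φ u + N u * σ = 0 := by linarith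
  refine ⟨z, ?_, ?_⟩
  · intro x
    rw [hzx x]
    have hk := hkey x
    rw [hc₀] at hk
    have h3 : φ x ≤ N x * (-σ) := by nlinarith
    rw [inv_mul_le_iff₀ hσpos']
    linarith
  · rw [hzx u]
    have h4 : φ u = N u * (-σ) := by linarith
    rw [h4]
    field_simp

end PartE1

-- Part E2 : the hard direction of Fenchel–Moreau
section PartE2
set_option linter.unusedSectionVars false
set_option maxHeartbeats 1000000
variable {X : Type*} [NormedAddCommGroup X] [InnerProductSpace ℝ X]
  [FiniteDimensional ℝ X] {f : X → EReal}

theorem fenchel_biconj (hfbot : ∀ x, f x ≠ ⊥) (hproper : ∃ x, f x ≠ ⊤)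
    (hclosed : LowerSemicontinuous f) (hconv : ERealConvexOn f)
    {g : X → ℝ} (hg : ∀ y, ((g y : ℝ) : EReal) = fenchelConj f y)
    (w : X) (r : ℝ) (hr : ((r : ℝ) : EReal) < f w) :
    ∃ v : X, r < ⟪w, v⟫ - g v := by
  classical
  -- the epigraph
  set epi : Set (X × ℝ) := {p | f p.1 ≤ ((p.2 : ℝ) : EReal)} with hepi
  have hepiclosed : IsClosed epi := by
    have h1 : IsClosed {p : X × EReal | f p.1 ≤ p.2} :=
      lowerSemicontinuous_iff_isClosed_epigraph.1 hclosed
    have h2 : epi = (fun p : X × ℝ => ((p.1, (p.2 : EReal)) : X × EReal)) ⁻¹'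
        {p : X × EReal | f p.1 ≤ p.2} := rfl
    rw [h2]
    exact h1.preimage (continuous_fst.prodMk (continuous_coe_real_ereal.comp continuous_snd))
  have hepiconv : Convex ℝ epi := by
    rintro p hp q hq a b ha hb hab
    simp only [hepi, Set.mem_setOf_eq] at hp hq ⊢
    have hptop : f p.1 ≠ ⊤ := fun h => by rw [h] at hp; exact (EReal.coe_lt_top _).not_ge hp
    have hqtop : f q.1 ≠ ⊤ := fun h => by rw [h] at hq; exact (EReal.coe_lt_top _).not_ge hq
    have hb' : b = 1 - a := by linarith
    subst hb'
    obtain ⟨hcne, hcle⟩ := real_convex hconv hfbot hptop hqtop ha (by linarith)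
    have hfst : (a • p + (1 - a) • q).1 = a • p.1 + (1 - a) • q.1 := rfl
    have hsnd : (a • p + (1 - a) • q).2 = a * p.2 + (1 - a) * q.2 := rfl
    rw [hfst, hsnd, freal hfbot hcne]
    have hp' : (f p.1).toReal ≤ p.2 := by
      rw [freal hfbot hptop] at hp; exact_mod_cast hp
    have hq' : (f q.1).toReal ≤ q.2 := by
      rw [freal hfbot hqtop] at hq; exact_mod_cast hq
    have : (f (a • p.1 + (1 - a) • q.1)).toReal ≤ a * p.2 + (1 - a) * q.2 := by
      have h3 : a * (f p.1).toReal ≤ a * p.2 := mul_le_mul_of_nonneg_left hp' ha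
      have h4 : (1 - a) * (f q.1).toReal ≤ (1 - a) * q.2 :=
        mul_le_mul_of_nonneg_left hq' (by linarith)
      linarith
    exact_mod_cast this
  have hnotmem : (w, r) ∉ epi := by
    simp only [hepi, Set.mem_setOf_eq]
    exact not_le.2 hr
  obtain ⟨ℓ, u, hℓ, hu⟩ := geometric_hahn_banach_closed_point hepiconv hepiclosed hnotmem
  set σ := ℓ (0, 1) with hσ
  set φ : X → ℝ := fun x => ℓ (x, 0) with hφ
  have hdecomp : ∀ (x : X) (t : ℝ), ℓ (x, t) = φ x + t * σ := by
    intro x t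
    have he : ((x, t) : X × ℝ) = (x, (0:ℝ)) + t • ((0:X), (1:ℝ)) := by
      simp [Prod.ext_iff]
    rw [he, map_add, map_smul]
    simp [hφ, hσ, smul_eq_mul]
  have hsep : ∀ (x : X) (t : ℝ), f x ≤ ((t:ℝ):EReal) → φ x + t * σ < u := by
    intro x t hxt
    have := hℓ (x, t) hxt
    rwa [hdecomp] at this
  have hwr : u < φ w + r * σ := by
    have := hu
    rwa [hdecomp] at this
  obtain ⟨x₁, hx₁⟩ := hproper
  have hx₁mem : ∀ t : ℝ, (f x₁).toReal ≤ t → φ x₁ + t * σ < u := by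
    intro t ht
    refine hsep x₁ t ?_
    rw [freal hfbot hx₁]
    exact_mod_cast ht
  have hσ0 : σ ≤ 0 := by
    by_contra hσpos
    rw [not_le] at hσpos
    set t := max ((f x₁).toReal) ((u - φ x₁) / σ) with ht
    have h1 := hx₁mem t (le_max_left _ _)
    have h2 : (u - φ x₁) / σ ≤ t := le_max_right _ _
    rw [div_le_iff₀ hσpos] at h2
    linarith
  -- Riesz representative of φ
  set φL : X →L[ℝ] ℝ := ℓ.comp (ContinuousLinearMap.inl ℝ X ℝ) with hφL
  have hφLeq : ∀ x, φL x = φ x := by intro x; simp [hφL, hφ]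
  set z := (InnerProductSpace.toDual ℝ X).symm φL with hz
  have hzx : ∀ x, ⟪x, z⟫ = φ x := by
    intro x
    rw [real_inner_comm, hz, InnerProductSpace.toDual_symm_apply, hφLeq]
  -- key upper bound for g at suitable points
  have hgle : ∀ v : X, ∀ c : ℝ, (∀ x, f x ≠ ⊤ → ⟪x, v⟫ - (f x).toReal ≤ c) → g v ≤ c := by
    intro v c hc
    have h1 : fenchelConj f v ≤ ((c : ℝ) : EReal) := by
      rw [fenchelConj]
      refine iSup_le fun x => ?_
      by_cases hx : f x = ⊤
      · rw [hx, EReal.sub_top]; exact bot_le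
      · rw [freal hfbot hx, ← EReal.coe_sub]
        exact_mod_cast hc x hx
    rw [← hg v] at h1
    exact_mod_cast h1
  have hfclow : ∀ v x : X, f x ≠ ⊤ → ⟪x, v⟫ - (f x).toReal ≤ g v := by
    intro v x hx
    have h1 : ((⟪x, v⟫ : ℝ) : EReal) - f x ≤ fenchelConj f v :=
      le_iSup (fun x => ((⟪x, v⟫ : ℝ) : EReal) - f x) x
    rw [← hg v, freal hfbot hx, ← EReal.coe_sub] at h1
    exact_mod_cast h1
  rcases eq_or_lt_of_le hσ0 with hσz | hσneg
  · -- σ = 0 : recession direction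
    have hφlt : ∀ x, f x ≠ ⊤ → φ x < u := by
      intro x hx
      have := hsep x ((f x).toReal) (le_of_eq (freal hfbot hx))
      rw [hσz] at this
      simpa using this
    have hwgt : u < φ w := by
      rw [hσz] at hwr
      simpa using hwr
    set lam := max 1 ((r + g 0 + 1) / (φ w - u)) with hlam
    have hlam1 : (1:ℝ) ≤ lam := le_max_left _ _
    have hlam0 : 0 ≤ lam := by linarith
    have hlam2 : (r + g 0 + 1) / (φ w - u) ≤ lam := le_max_right _ _
    have hlam3 : r + g 0 + 1 ≤ lam * (φ w - u) := by
      rw [div_le_iff₀ (by linarith)] at hlam2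
      linarith
    refine ⟨lam • z, ?_⟩
    have hgv : g (lam • z) ≤ lam * u + g 0 := by
      refine hgle _ _ fun x hx => ?_
      have h1 : ⟪x, lam • z⟫ = lam * φ x := by
        rw [real_inner_smul_right, hzx]
      have h2 : ⟪x, (0:X)⟫ - (f x).toReal ≤ g 0 := hfclow 0 x hx
      rw [inner_zero_right] at h2
      have h3 : lam * φ x ≤ lam * u := mul_le_mul_of_nonneg_left (hφlt x hx).le hlam0
      rw [h1]
      linarith
    have hwv : ⟪w, lam • z⟫ = lam * φ w := by
      rw [real_inner_smul_right, hzx]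
    rw [hwv]
    nlinarith
  · -- σ < 0
    set v := (-σ)⁻¹ • z with hv
    have hσpos' : (0:ℝ) < -σ := by linarith
    have hxv : ∀ x, ⟪x, v⟫ = (-σ)⁻¹ * φ x := by
      intro x
      rw [hv, real_inner_smul_right, hzx]
    refine ⟨v, ?_⟩
    have hgv : g v ≤ u / (-σ) := by
      refine hgle _ _ fun x hx => ?_
      have h1 := hsep x ((f x).toReal) (le_of_eq (freal hfbot hx))
      rw [hxv]
      rw [le_div_iff₀ hσpos']
      have hm : (-σ)⁻¹ * -σ = 1 := inv_mul_cancel₀ (ne_of_gt hσpos')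
      have he : ((-σ)⁻¹ * φ x - (f x).toReal) * -σ = φ x + (f x).toReal * σ := by
        calc ((-σ)⁻¹ * φ x - (f x).toReal) * -σ
            = φ x * ((-σ)⁻¹ * -σ) - (f x).toReal * -σ := by ring
          _ = φ x + (f x).toReal * σ := by rw [hm]; ring
      rw [he]
      linarith
    have hwv : ⟪w, v⟫ = (-σ)⁻¹ * φ w := hxv w
    have hfin : u / (-σ) < ⟪w, v⟫ - r := by
      rw [hwv, div_lt_iff₀ hσpos']
      have hm : (-σ)⁻¹ * -σ = 1 := inv_mul_cancel₀ (ne_of_gt hσpos')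
      have he : ((-σ)⁻¹ * φ w - r) * -σ = φ w + r * σ := by
        calc ((-σ)⁻¹ * φ w - r) * -σ = φ w * ((-σ)⁻¹ * -σ) - r * -σ := by ring
          _ = φ w + r * σ := by rw [hm]; ring
      rw [he]
      linarith
    linarith

end PartE2

-- Part E3 : the reverse direction
section PartE3
set_option linter.unusedSectionVars false
set_option maxHeartbeats 1000000
variable {X : Type*} [NormedAddCommGroup X] [InnerProductSpace ℝ X]
  [FiniteDimensional ℝ X] {N : X → ℝ} {β : ℝ} {f : X → EReal}

theorem reverse_direction (hN : IsNormOn N) (hβ : 0 < β)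
    (hfbot : ∀ x, f x ≠ ⊥) (hproper : ∃ x, f x ≠ ⊤)
    (hclosed : LowerSemicontinuous f) (hconv : ERealConvexOn f)
    {g : X → ℝ} (hg : ∀ y, ((g y : ℝ) : EReal) = fenchelConj f y)
    (hsm : StronglySmoothOn (dualNorm N) (1 / β) g) :
    EStrongConvexOn N β f := by
  intro x hxri y hyri α hα0 hα1
  have hx : f x ≠ ⊤ := intrinsicInterior_subset hxri
  have hy : f y ≠ ⊤ := intrinsicInterior_subset hyri
  set w := α • x + (1 - α) • y with hw
  set Fx := (f x).toReal with hFx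
  set Fy := (f y).toReal with hFy
  set n := N (x - y) with hn
  have hn0 : 0 ≤ n := hN.1 _
  set c := β / 2 * α * (1 - α) * n ^ 2 with hc
  have hfc : ∀ (v' xx : X), f xx ≠ ⊤ → ⟪xx, v'⟫ - (f xx).toReal ≤ g v' := by
    intro v' xx hxx
    have h1 : ((⟪xx, v'⟫ : ℝ) : EReal) - f xx ≤ fenchelConj f v' :=
      le_iSup (fun x => ((⟪x, v'⟫ : ℝ) : EReal) - f x) xx
    rw [← hg v', freal hfbot hxx, ← EReal.coe_sub] at h1
    exact_mod_cast h1
  -- support functional for x - y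
  obtain ⟨z₀, hz₀le, hz₀eq⟩ := exists_support_functional hN (x - y)
  have hz₀d : dualNorm N z₀ ≤ 1 := by
    refine csSup_le ⟨0, dualNorm_set_nonempty hN _⟩ ?_
    rintro r ⟨xx, hxx1, rfl⟩
    exact le_trans (hz₀le xx) hxx1
  have hz₀d' : dualNorm N (-z₀) ≤ 1 := by
    refine csSup_le ⟨0, dualNorm_set_nonempty hN _⟩ ?_
    rintro r ⟨xx, hxx1, rfl⟩
    have h2 : ⟪xx, -z₀⟫ = ⟪-xx, z₀⟫ := by
      rw [inner_neg_right, inner_neg_left]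
    rw [h2]
    refine le_trans (hz₀le (-xx)) ?_
    rw [hN.neg]
    exact hxx1
  set lam := (1 - α) * β * n with hlam
  have hlam0 : 0 ≤ lam := by
    have : (0:ℝ) ≤ 1 - α := by linarith
    positivity
  set μ := α / (1 - α) with hμ
  have hμ0 : 0 ≤ μ := by
    have h1a : (0:ℝ) < 1 - α := by linarith
    positivity
  have h1a : (1:ℝ) - α ≠ 0 := by intro h; linarith
  have hμα : (1 - α) * μ = α := by
    rw [hμ, mul_comm, div_mul_cancel₀ _ h1a]
  set z := lam • z₀ with hz
  set z' := (μ * lam) • (-z₀) with hz'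
  have hNdz : dualNorm N z ≤ lam := by
    refine le_trans (dualNorm_smul_le hN hlam0 z₀) ?_
    nlinarith
  have hNdz' : dualNorm N z' ≤ μ * lam := by
    refine le_trans (dualNorm_smul_le hN (by positivity) (-z₀)) ?_
    nlinarith [mul_nonneg hμ0 hlam0]
  have hNdz0 : 0 ≤ dualNorm N z := dualNorm_nonneg hN _
  have hNdz0' : 0 ≤ dualNorm N z' := dualNorm_nonneg hN _
  -- per-direction bound
  have hvbound : ∀ v : X, ⟪w, v⟫ - g v ≤ α * Fx + (1 - α) * Fy - c := by
    intro v
    set Gv := gradient g v with hGv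
    have hsz := hsm.2 v z
    have hsz' := hsm.2 v z'
    have hA : ⟪x, v⟫ + ⟪x, z⟫ - g v - ⟪Gv, z⟫ - 1 / β / 2 * dualNorm N z ^ 2 ≤ Fx := by
      have h1 := hfc (v + z) x hx
      rw [inner_add_right] at h1
      linarith
    have hB : ⟪y, v⟫ + ⟪y, z'⟫ - g v - ⟪Gv, z'⟫ - 1 / β / 2 * dualNorm N z' ^ 2 ≤ Fy := by
      have h1 := hfc (v + z') y hy
      rw [inner_add_right] at h1
      linarith
    have hwv : ⟪w, v⟫ = α * ⟪x, v⟫ + (1 - α) * ⟪y, v⟫ := by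
      rw [hw, inner_add_left, real_inner_smul_left, real_inner_smul_left]
    have hsupp : ⟪x, z₀⟫ - ⟪y, z₀⟫ = n := by
      rw [← inner_sub_left]
      exact hz₀eq
    have hxz : ⟪x, z⟫ = lam * ⟪x, z₀⟫ := real_inner_smul_right _ _ _
    have hyz' : ⟪y, z'⟫ = -(μ * lam) * ⟪y, z₀⟫ := by
      rw [hz', real_inner_smul_right, inner_neg_right]
      ring
    have hGz : ⟪Gv, z⟫ = lam * ⟪Gv, z₀⟫ := real_inner_smul_right _ _ _
    have hGz' : ⟪Gv, z'⟫ = -(μ * lam) * ⟪Gv, z₀⟫ := by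
      rw [hz', real_inner_smul_right, inner_neg_right]
      ring
    have hgradsum : α * ⟪Gv, z⟫ + (1 - α) * ⟪Gv, z'⟫ = 0 := by
      rw [hGz, hGz']
      have : α * (lam * ⟪Gv, z₀⟫) + (1 - α) * (-(μ * lam) * ⟪Gv, z₀⟫)
          = (α - (1 - α) * μ) * lam * ⟪Gv, z₀⟫ := by ring
      rw [this, hμα]
      ring
    have hinnersum : α * ⟪x, z⟫ + (1 - α) * ⟪y, z'⟫ = α * lam * n := by
      rw [hxz, hyz']
      have h1 : α * (lam * ⟪x, z₀⟫) + (1 - α) * (-(μ * lam) * ⟪y, z₀⟫)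
          = α * lam * ⟪x, z₀⟫ - ((1 - α) * μ) * lam * ⟪y, z₀⟫ := by ring
      rw [h1, hμα]
      have h2 : α * lam * ⟪x, z₀⟫ - α * lam * ⟪y, z₀⟫ = α * lam * (⟪x, z₀⟫ - ⟪y, z₀⟫) := by
        ring
      rw [h2, hsupp]
    have hpen : 1 / β / 2 * (α * dualNorm N z ^ 2 + (1 - α) * dualNorm N z' ^ 2)
        ≤ 1 / β / 2 * (α * lam ^ 2 + (1 - α) * (μ * lam) ^ 2) := by
      have h1 : dualNorm N z ^ 2 ≤ lam ^ 2 := by nlinarith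
      have h2 : dualNorm N z' ^ 2 ≤ (μ * lam) ^ 2 := by nlinarith [mul_nonneg hμ0 hlam0]
      have h3 : α * dualNorm N z ^ 2 + (1 - α) * dualNorm N z' ^ 2
          ≤ α * lam ^ 2 + (1 - α) * (μ * lam) ^ 2 := by
        have h4 : α * dualNorm N z ^ 2 ≤ α * lam ^ 2 :=
          mul_le_mul_of_nonneg_left h1 hα0.le
        have h5 : (1 - α) * dualNorm N z' ^ 2 ≤ (1 - α) * (μ * lam) ^ 2 :=
          mul_le_mul_of_nonneg_left h2 (by linarith)
        linarith
      exact mul_le_mul_of_nonneg_left h3 (by positivity)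
    have hid : α * lam * n - 1 / β / 2 * (α * lam ^ 2 + (1 - α) * (μ * lam) ^ 2) = c := by
      rw [hlam, hμ, hc]
      field_simp
      ring
    -- combine
    have hcomb : α * (⟪x, v⟫ + ⟪x, z⟫ - g v - ⟪Gv, z⟫ - 1 / β / 2 * dualNorm N z ^ 2)
        + (1 - α) * (⟪y, v⟫ + ⟪y, z'⟫ - g v - ⟪Gv, z'⟫ - 1 / β / 2 * dualNorm N z' ^ 2)
        ≤ α * Fx + (1 - α) * Fy := by
      have h4 := mul_le_mul_of_nonneg_left hA hα0.le
      have h5 := mul_le_mul_of_nonneg_left hB (by linarith : (0:ℝ) ≤ 1 - α)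
      linarith
    have hexpand : α * (⟪x, v⟫ + ⟪x, z⟫ - g v - ⟪Gv, z⟫ - 1 / β / 2 * dualNorm N z ^ 2)
        + (1 - α) * (⟪y, v⟫ + ⟪y, z'⟫ - g v - ⟪Gv, z'⟫ - 1 / β / 2 * dualNorm N z' ^ 2)
        = (α * ⟪x, v⟫ + (1 - α) * ⟪y, v⟫) + (α * ⟪x, z⟫ + (1 - α) * ⟪y, z'⟫) - g v
          - (α * ⟪Gv, z⟫ + (1 - α) * ⟪Gv, z'⟫)
          - 1 / β / 2 * (α * dualNorm N z ^ 2 + (1 - α) * dualNorm N z' ^ 2) := by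
      ring
    rw [hexpand] at hcomb
    rw [hgradsum, hinnersum] at hcomb
    -- hcomb : ⟪w,v⟫-ish + α lam n - g v - 0 - pen ≤ α Fx + (1-α) Fy
    have hfinal : ⟪w, v⟫ + α * lam * n - g v
        - 1 / β / 2 * (α * lam ^ 2 + (1 - α) * (μ * lam) ^ 2) ≤ α * Fx + (1 - α) * Fy := by
      rw [hwv]
      linarith
    linarith [hfinal, hid]
  -- conclude using Fenchel–Moreau
  have hRHS : ((α : ℝ) : EReal) * f x + ((1 - α : ℝ) : EReal) * f y
      - ((β / 2 * α * (1 - α) * N (x - y) ^ 2 : ℝ) : EReal)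
      = ((α * Fx + (1 - α) * Fy - c : ℝ) : EReal) := by
    rw [freal hfbot hx, freal hfbot hy, ← EReal.coe_mul, ← EReal.coe_mul, ← EReal.coe_add,
      ← EReal.coe_sub]
  rw [hRHS]
  by_contra hcon
  rw [not_le] at hcon
  obtain ⟨v, hv⟩ := fenchel_biconj hfbot hproper hclosed hconv hg w
    (α * Fx + (1 - α) * Fy - c) hcon
  have := hvbound v
  linarith

end PartE3

/-- Strong convexity / strong smoothness duality: a closed (lower semicontinuous), convex,
proper function `f : X → ℝ ∪ {∞}` on a Euclidean space is `β`-strongly convex w.r.t. a norm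
`N` iff its Fenchel conjugate `f⋆` is (finite-valued and) `1/β`-strongly smooth w.r.t. the
dual norm of `N`. -/
theorem stmt0 [FiniteDimensional ℝ X]
    (N : X → ℝ) (hN : IsNormOn N) (β : ℝ) (hβ : 0 < β)
    (f : X → EReal) (hfbot : ∀ x, f x ≠ ⊥) (hproper : ∃ x, f x ≠ ⊤)
    (hclosed : LowerSemicontinuous f) (hconv : ERealConvexOn f) :
    EStrongConvexOn N β f ↔
      ∃ g : X → ℝ, (∀ y, (g y : EReal) = fenchelConj f y) ∧
        StronglySmoothOn (dualNorm N) (1 / β) g := by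
  constructor
  · intro hsc
    exact forward_direction hN hβ hfbot hproper hclosed hconv hsc
  · rintro ⟨g, hg, hsm⟩
    exact reverse_direction hN hβ hfbot hproper hclosed hconv hg hsm
end

section
/- Let f : X → ℝ ∪ {∞} be closed convex and β-strongly convex with respect to a norm ‖·‖ on a real inner product space X, with f*(0) = 0. Then for any sequence v_1, …, v_n ∈ X and any u ∈ X, writing v_{1:i} = v_1 + ⋯ + v_i, we have Σ_{i=1}^n ⟨v_i, u⟩ − f(u) ≤ f*(v_{1:n}) ≤ Σ_{i=1}^n ⟨∇f*(v_{1:i−1}), v_i⟩ + (1/(2β)) Σ_{i=1}^n ‖v_i‖*² (where v_{1:0} = 0). -/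
open scoped BigOperators
open RealInnerProductSpace

variable {X : Type*} [NormedAddCommGroup X] [InnerProductSpace ℝ X]

namespace SCAux

theorem ereal_sub_le {b : EReal} {a r c : ℝ} (h : (r:EReal) ≤ b) (hc : a - r ≤ c) :
    (a:EReal) - b ≤ (c:EReal) := by
  induction b with
  | bot => simp at h
  | coe b =>
      rw [← EReal.coe_sub, EReal.coe_le_coe_iff]
      have : r ≤ b := by exact_mod_cast h
      linarith
  | top => simp

theorem N_zero (N : X → ℝ) (hN : IsNormOn N) : N 0 = 0 := by
  have := hN.2.2.1 0 0
  simpa using this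

theorem N_convexOn (N : X → ℝ) (hN : IsNormOn N) : ConvexOn ℝ Set.univ N := by
  refine ⟨convex_univ, fun x _ y _ a b ha hb _ => ?_⟩
  calc N (a • x + b • y) ≤ N (a • x) + N (b • y) := hN.2.2.2 _ _
  _ = a * N x + b * N y := by
      rw [hN.2.2.1, hN.2.2.1, abs_of_nonneg ha, abs_of_nonneg hb]

theorem N_continuous [FiniteDimensional ℝ X] (N : X → ℝ) (hN : IsNormOn N) : Continuous N := by
  rw [← continuousOn_univ]
  exact (N_convexOn N hN).continuousOn isOpen_univ

theorem N_lower [FiniteDimensional ℝ X] (N : X → ℝ) (hN : IsNormOn N) :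
    ∃ m > 0, ∀ x, m * ‖x‖ ≤ N x := by
  by_cases hS : Subsingleton X
  · refine ⟨1, one_pos, fun x => ?_⟩
    have : x = 0 := Subsingleton.elim x 0
    simp [this, N_zero N hN]
  · have : Nontrivial X := not_subsingleton_iff_nontrivial.mp hS
    obtain ⟨x₀, hx₀⟩ := exists_ne (0 : X)
    have hsne : (Metric.sphere (0:X) 1).Nonempty :=
      ⟨‖x₀‖⁻¹ • x₀, by simp [norm_smul, inv_mul_cancel₀ (norm_ne_zero_iff.mpr hx₀)]⟩
    obtain ⟨z, hz, hzmin⟩ :=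
      (isCompact_sphere (0:X) 1).exists_isMinOn hsne ((N_continuous N hN).continuousOn)
    have hz1 : ‖z‖ = 1 := by simpa using hz
    have hzne : z ≠ 0 := by intro h; rw [h] at hz1; simp at hz1
    have hm : 0 < N z := by
      rcases lt_or_eq_of_le (hN.1 z) with h | h
      · exact h
      · exact absurd (hN.2.1 z h.symm) hzne
    refine ⟨N z, hm, fun x => ?_⟩
    rcases eq_or_ne x 0 with rfl | hx
    · simp [N_zero N hN]
    · have hu : (‖x‖⁻¹ • x) ∈ Metric.sphere (0:X) 1 := by
        simp [norm_smul, inv_mul_cancel₀ (norm_ne_zero_iff.mpr hx)]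
      have hthis : N z ≤ N (‖x‖⁻¹ • x) := hzmin hu
      have hNs : N (‖x‖⁻¹ • x) = ‖x‖⁻¹ * N x := by
        rw [hN.2.2.1]; congr 1; exact abs_of_nonneg (by positivity)
      rw [hNs] at hthis
      have hxpos : (0:ℝ) < ‖x‖ := norm_pos_iff.mpr hx
      rw [mul_comm]
      calc ‖x‖ * N z ≤ ‖x‖ * (‖x‖⁻¹ * N x) := by
            exact mul_le_mul_of_nonneg_left hthis hxpos.le
      _ = N x := by field_simp
  
theorem dualNorm_bddAbove [FiniteDimensional ℝ X] (N : X → ℝ) (hN : IsNormOn N) (v : X) :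
    BddAbove {r : ℝ | ∃ x : X, N x ≤ 1 ∧ r = ⟪x, v⟫} := by
  obtain ⟨m, hm, hmN⟩ := N_lower N hN
  refine ⟨m⁻¹ * ‖v‖, fun r ⟨x, hx1, hrx⟩ => ?_⟩
  have h1 : ‖x‖ ≤ m⁻¹ := by
    rw [← one_div, le_div_iff₀ hm, mul_comm]
    exact (hmN x).trans hx1
  calc r = ⟪x, v⟫ := hrx
  _ ≤ ‖x‖ * ‖v‖ := real_inner_le_norm x v
  _ ≤ m⁻¹ * ‖v‖ := by exact mul_le_mul_of_nonneg_right h1 (norm_nonneg v)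

theorem dualNorm_nonneg [FiniteDimensional ℝ X] (N : X → ℝ) (hN : IsNormOn N) (v : X) :
    0 ≤ dualNorm N v := by
  apply le_csSup (dualNorm_bddAbove N hN v)
  exact ⟨0, by simp [N_zero N hN]⟩

theorem inner_le_dualNorm [FiniteDimensional ℝ X] (N : X → ℝ) (hN : IsNormOn N) (w v : X) :
    ⟪w, v⟫ ≤ N w * dualNorm N v := by
  rcases eq_or_ne w 0 with rfl | hw
  · simp [N_zero N hN]
  · have hNw : 0 < N w := by
      rcases lt_or_eq_of_le (hN.1 w) with h | h
      · exact h
      · exact absurd (hN.2.1 w h.symm) hw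
    have hmem : (N w)⁻¹ * ⟪w, v⟫ ∈ {r : ℝ | ∃ x : X, N x ≤ 1 ∧ r = ⟪x, v⟫} := by
      refine ⟨(N w)⁻¹ • w, ?_, by rw [real_inner_smul_left]⟩
      rw [hN.2.2.1, abs_of_nonneg (by positivity), inv_mul_cancel₀ hNw.ne']
    have := le_csSup (dualNorm_bddAbove N hN v) hmem
    calc ⟪w, v⟫ = N w * ((N w)⁻¹ * ⟪w, v⟫) := by field_simp
    _ ≤ N w * dualNorm N v := mul_le_mul_of_nonneg_left this hNw.le

theorem mem_intrinsicInterior_iff {S : Set X} {z : X} :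
    z ∈ intrinsicInterior ℝ S ↔ z ∈ affineSpan ℝ S ∧
      ∃ ε > 0, ∀ q : X, q ∈ affineSpan ℝ S → ‖q - z‖ < ε → q ∈ S := by
  constructor
  · rintro ⟨z', hz', rfl⟩
    refine ⟨z'.2, ?_⟩
    rw [mem_interior_iff_mem_nhds] at hz'
    rcases z' with ⟨z, hzspan⟩
    rw [nhds_subtype_eq_comap, Filter.mem_comap] at hz'
    obtain ⟨U, hU, hUsub⟩ := hz'
    obtain ⟨ε, hε, hball⟩ := Metric.mem_nhds_iff.mp hU
    refine ⟨ε, hε, fun q hq hqz => ?_⟩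
    have : (⟨q, hq⟩ : affineSpan ℝ S) ∈ (Subtype.val ⁻¹' U : Set (affineSpan ℝ S)) := by
      apply hball
      rwa [Metric.mem_ball, dist_eq_norm]
    exact hUsub this
  · rintro ⟨hzspan, ε, hε, h⟩
    refine ⟨⟨z, hzspan⟩, ?_, rfl⟩
    rw [mem_interior_iff_mem_nhds, nhds_subtype_eq_comap, Filter.mem_comap]
    refine ⟨Metric.ball z ε, Metric.ball_mem_nhds z hε, fun q hq => ?_⟩
    exact h q.1 q.2 (by rwa [← dist_eq_norm, ← Metric.mem_ball])

theorem combo_mem_intrinsicInterior {S : Set X} (hconv : Convex ℝ S)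
    {x z : X} (hx : x ∈ S) (hz : z ∈ intrinsicInterior ℝ S) {α : ℝ}
    (hα0 : 0 < α) (hα1 : α ≤ 1) :
    α • z + (1 - α) • x ∈ intrinsicInterior ℝ S := by
  rw [mem_intrinsicInterior_iff] at hz ⊢
  obtain ⟨hzspan, ε, hε, hball⟩ := hz
  have hxspan : x ∈ affineSpan ℝ S := subset_affineSpan ℝ S hx
  have hdir : ∀ w₁ ∈ affineSpan ℝ S, ∀ w₂ ∈ affineSpan ℝ S, ∀ c : ℝ, ∀ p ∈ affineSpan ℝ S,
      c • (w₁ - w₂) + p ∈ affineSpan ℝ S := by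
    intro w₁ h₁ w₂ h₂ c p hp
    have hd : w₁ - w₂ ∈ (affineSpan ℝ S).direction := by
      simpa using AffineSubspace.vsub_mem_direction h₁ h₂
    have := AffineSubspace.vadd_mem_of_mem_direction ((affineSpan ℝ S).direction.smul_mem c hd) hp
    simpa using this
  have hpspan : α • z + (1 - α) • x ∈ affineSpan ℝ S := by
    have := hdir z hzspan x hxspan α x hxspan
    convert this using 1
    module
  refine ⟨hpspan, α * ε, by positivity, fun q hqspan hqd => ?_⟩
  set p := α • z + (1 - α) • x with hp
  have hwspan : z + α⁻¹ • (q - p) ∈ affineSpan ℝ S := by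
    have := hdir q hqspan p hpspan α⁻¹ z hzspan
    convert this using 1
    module
  have hwS : z + α⁻¹ • (q - p) ∈ S := by
    apply hball _ hwspan
    have : (z + α⁻¹ • (q - p)) - z = α⁻¹ • (q - p) := by abel
    rw [this, norm_smul, norm_inv, Real.norm_eq_abs, abs_of_pos hα0]
    calc α⁻¹ * ‖q - p‖ < α⁻¹ * (α * ε) := by
          exact mul_lt_mul_of_pos_left hqd (by positivity)
    _ = ε := by field_simp
  have hq : q = α • (z + α⁻¹ • (q - p)) + (1 - α) • x := by
    rw [hp]
    match_scalars <;> field_simp <;> ring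
  rw [hq]
  exact hconv hwS hx hα0.le (by linarith) (by ring)

end SCAux

namespace SCAux
open Filter Topology

variable {X : Type*} [NormedAddCommGroup X] [InnerProductSpace ℝ X]

set_option maxHeartbeats 3200000 in
theorem key_step [FiniteDimensional ℝ X]
    (N : X → ℝ) (hN : IsNormOn N) (β : ℝ) (hβ : 0 < β)
    (f : X → EReal) (hfbot : ∀ x, f x ≠ ⊥) (hproper : ∃ x, f x ≠ ⊤)
    (hclosed : LowerSemicontinuous f) (hconv : ERealConvexOn f)
    (hsc : EStrongConvexOn N β f)
    (g : X → ℝ) (hg : ∀ y, (g y : EReal) = fenchelConj f y)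
    (hgdiff : Differentiable ℝ g)
    (y v : X) :
    g (y + v) ≤ g y + ⟪gradient g y, v⟫ + 1 / (2 * β) * dualNorm N v ^ 2 := by
  classical
  set S : Set X := {z : X | f z ≠ ⊤} with hSdef
  set F : X → ℝ := fun x => (f x).toReal with hFdef
  have hF : ∀ x ∈ S, f x = ((F x : ℝ) : EReal) := fun x hx =>
    (EReal.coe_toReal hx (hfbot x)).symm
  have memS : ∀ {x : X} {r : ℝ}, f x ≤ (r : EReal) → x ∈ S := by
    intro x r h
    exact (h.trans_lt (EReal.coe_lt_top r)).ne
  have Fle : ∀ {x : X} {r : ℝ}, f x ≤ (r : EReal) → F x ≤ r := by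
    intro x r h
    have hx : x ∈ S := memS h
    rw [hF x hx] at h
    exact_mod_cast h
  -- Fenchel–Young
  have FY : ∀ (y' x : X), ((⟪x, y'⟫ : ℝ) : EReal) - f x ≤ (g y' : EReal) := by
    intro y' x
    rw [hg y']
    exact le_iSup (fun x => ((⟪x, y'⟫ : ℝ) : EReal) - f x) x
  have FYr : ∀ (y' x : X), x ∈ S → ⟪x, y'⟫ - F x ≤ g y' := by
    intro y' x hx
    have := FY y' x
    rw [hF x hx, ← EReal.coe_sub] at this
    exact_mod_cast this
  -- convexity, real form
  have hconvr : ∀ x ∈ S, ∀ w ∈ S, ∀ α : ℝ, 0 ≤ α → α ≤ 1 →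
      α • x + (1 - α) • w ∈ S ∧ F (α • x + (1 - α) • w) ≤ α * F x + (1 - α) * F w := by
    intro x hx w hw α hα0 hα1
    have h := hconv x w α hα0 hα1
    rw [hF x hx, hF w hw, ← EReal.coe_mul, ← EReal.coe_mul, ← EReal.coe_add] at h
    exact ⟨memS h, Fle h⟩
  have hSconv : Convex ℝ S := by
    intro x hx w hw a b ha hb hab
    have hb' : b = 1 - a := by linarith
    rw [hb']
    exact (hconvr x hx w hw a ha (by linarith)).1
  -- strong convexity, real form
  have hscr : ∀ x ∈ intrinsicInterior ℝ S, ∀ w ∈ intrinsicInterior ℝ S, ∀ α : ℝ,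
      0 < α → α < 1 →
      α • x + (1 - α) • w ∈ S ∧
        F (α • x + (1 - α) • w) ≤
          α * F x + (1 - α) * F w - β / 2 * α * (1 - α) * N (x - w) ^ 2 := by
    intro x hx w hw α hα0 hα1
    have hxS : x ∈ S := intrinsicInterior_subset hx
    have hwS : w ∈ S := intrinsicInterior_subset hw
    have h := hsc x hx w hw α hα0 hα1
    rw [hF x hxS, hF w hwS, ← EReal.coe_mul, ← EReal.coe_mul, ← EReal.coe_add,
      ← EReal.coe_sub] at h
    exact ⟨memS h, Fle h⟩
  obtain ⟨x₁, hx₁⟩ := hproper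
  have hSne : S.Nonempty := ⟨x₁, hx₁⟩
  obtain ⟨z₀, hz₀⟩ := Set.Nonempty.intrinsicInterior hSconv hSne
  have hz₀S : z₀ ∈ S := intrinsicInterior_subset hz₀
  -- approximate maximizers in the intrinsic interior
  have happrox : ∀ ε : ℝ, 0 < ε → ∃ w ∈ intrinsicInterior ℝ S, g y - ε < ⟪w, y⟫ - F w := by
    intro ε hε
    have h1 : ((g y - ε / 2 : ℝ) : EReal) < (g y : EReal) := by exact_mod_cast by linarith
    rw [hg y] at h1
    obtain ⟨x, hx⟩ := lt_iSup_iff.mp h1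
    have hxS : x ∈ S := by
      by_contra hxS
      have : f x = ⊤ := not_not.mp hxS
      rw [this, EReal.sub_top] at hx
      exact absurd hx (by simp)
    rw [hF x hxS, ← EReal.coe_sub] at hx
    have hx' : g y - ε / 2 < ⟪x, y⟫ - F x := by exact_mod_cast hx
    set c : ℝ := ⟪z₀, y⟫ - ⟪x, y⟫ - F z₀ + F x with hc
    set α : ℝ := min 1 (ε / (2 * (|c| + 1))) with hα
    have hα0 : 0 < α := lt_min one_pos (by positivity)
    have hα1 : α ≤ 1 := min_le_left _ _
    refine ⟨α • z₀ + (1 - α) • x, combo_mem_intrinsicInterior hSconv hxS hz₀ hα0 hα1, ?_⟩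
    have hFc := (hconvr z₀ hz₀S x hxS α hα0.le hα1).2
    have hinner : ⟪α • z₀ + (1 - α) • x, y⟫ = α * ⟪z₀, y⟫ + (1 - α) * ⟪x, y⟫ := by
      rw [inner_add_left, real_inner_smul_left, real_inner_smul_left]
    have habs : α * |c| ≤ ε / 2 := by
      have h2 : α ≤ ε / (2 * (|c| + 1)) := min_le_right _ _
      have h3 : α * |c| ≤ ε / (2 * (|c| + 1)) * |c| :=
        mul_le_mul_of_nonneg_right h2 (abs_nonneg c)
      have h4 : ε / (2 * (|c| + 1)) * |c| ≤ ε / 2 := by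
        rw [div_mul_eq_mul_div, div_le_div_iff₀ (by positivity) (by norm_num)]
        nlinarith [abs_nonneg c]
      linarith
    have hαc : α * c ≥ -(ε / 2) := by
      have := neg_abs_le c
      nlinarith [abs_nonneg c]
    have : ⟪α • z₀ + (1 - α) • x, y⟫ - F (α • z₀ + (1 - α) • x) ≥ (⟪x, y⟫ - F x) + α * c := by
      rw [hinner, hc]
      nlinarith
    linarith
  -- coercivity
  set C₀ : ℝ := 2 * g y + F z₀ - ⟪z₀, y⟫ with hC₀
  have hcoerc : ∀ w ∈ intrinsicInterior ℝ S,
      ⟪w, y⟫ - F w ≤ C₀ - β / 4 * N (w - z₀) ^ 2 := by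
    intro w hw
    have hsc2 := (hscr w hw z₀ hz₀ (1/2) (by norm_num) (by norm_num)).2
    have hmemmid := (hscr w hw z₀ hz₀ (1/2) (by norm_num) (by norm_num)).1
    have hFY := FYr y _ hmemmid
    have hinner : ⟪(1/2 : ℝ) • w + (1 - 1/2 : ℝ) • z₀, y⟫ = 1/2 * ⟪w, y⟫ + 1/2 * ⟪z₀, y⟫ := by
      rw [inner_add_left, real_inner_smul_left, real_inner_smul_left]; norm_num
    rw [hinner] at hFY
    nlinarith [hsc2, hFY]
  -- maximizing sequence
  have hwseq : ∀ k : ℕ, ∃ w ∈ intrinsicInterior ℝ S,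
      g y - 1 / (k + 1) < ⟪w, y⟫ - F w := fun k => happrox _ (by positivity)
  choose w hwmem hwval using hwseq
  -- the sequence is bounded
  obtain ⟨m, hm, hmN⟩ := N_lower N hN
  set B : ℝ := (C₀ - g y + 1) * 4 / β with hB
  have hNbd : ∀ k : ℕ, N (w k - z₀) ^ 2 ≤ B := by
    intro k
    have h1 := hcoerc (w k) (hwmem k)
    have h2 := hwval k
    have h3 : (0:ℝ) < 1 / (k + 1) := by positivity
    have h4 : (1:ℝ) / (k + 1) ≤ 1 := by
      rw [div_le_one (by positivity)]; linarith [Nat.cast_nonneg (α := ℝ) k]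
    rw [hB, le_div_iff₀ hβ]
    nlinarith [h1, h2, h3, h4]
  have hBnn : 0 ≤ B := le_trans (sq_nonneg _) (hNbd 0)
  set R : ℝ := Real.sqrt (B / m ^ 2) with hR
  have hball : ∀ k : ℕ, w k ∈ Metric.closedBall z₀ R := by
    intro k
    rw [Metric.mem_closedBall, dist_eq_norm]
    rw [hR, Real.le_sqrt (norm_nonneg _) (by positivity), le_div_iff₀ (by positivity)]
    have h5 := hmN (w k - z₀)
    have h6 := mul_le_mul h5 h5 (mul_nonneg hm.le (norm_nonneg _)) (hN.1 _)
    nlinarith [hNbd k]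
  obtain ⟨xs, _, σ, hσ, htend⟩ := (isCompact_closedBall z₀ R).tendsto_subseq hball
  -- the limit is a maximizer
  have hmax : f xs ≤ ((⟪xs, y⟫ - g y : ℝ) : EReal) := by
    by_contra hcon
    push_neg at hcon
    obtain ⟨c, hc1, hc2⟩ := EReal.exists_between_coe_real hcon
    have hc1' : ⟪xs, y⟫ - g y < c := by exact_mod_cast hc1
    set η : ℝ := (c - (⟪xs, y⟫ - g y)) / 2 with hη
    have hηpos : 0 < η := by rw [hη]; linarith
    have hev1 : ∀ᶠ z in 𝓝 xs, (c : EReal) < f z := hclosed xs (c : EReal) hc2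
    have hev2 : ∀ᶠ z in 𝓝 xs, ⟪z, y⟫ < ⟪xs, y⟫ + η := by
      have hlt : ⟪xs, y⟫ < ⟪xs, y⟫ + η := by linarith
      exact Tendsto.eventually_lt_const hlt ((continuous_id.inner continuous_const).tendsto xs)
    have hev := (hev1.and hev2).filter_mono (le_refl _)
    have hevk : ∀ᶠ k in atTop, (c : EReal) < f (w (σ k)) ∧ ⟪w (σ k), y⟫ < ⟪xs, y⟫ + η :=
      htend.eventually hev
    obtain ⟨k₀, hk₀⟩ := exists_nat_one_div_lt hηpos
    obtain ⟨K, hK⟩ := eventually_atTop.mp hevk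
    set k := max K k₀ with hk
    obtain ⟨hkc, hki⟩ := hK k (le_max_left _ _)
    have hwkS : w (σ k) ∈ S := intrinsicInterior_subset (hwmem (σ k))
    have hkc' : c < F (w (σ k)) := by
      have := hkc
      rw [hF _ hwkS] at this
      exact_mod_cast this
    have hφ : ⟪w (σ k), y⟫ - F (w (σ k)) < g y - η := by
      have : ⟪xs, y⟫ - c = g y - 2 * η := by rw [hη]; ring
      nlinarith
    have hφ2 := hwval (σ k)
    have hσk : (1:ℝ) / (σ k + 1) ≤ 1 / (k + 1) := by
      apply one_div_le_one_div_of_le (by positivity)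
      have := hσ.le_apply (x := k)
      exact_mod_cast Nat.add_le_add_right this 1
    have hk1 : (1:ℝ) / (k + 1) ≤ 1 / (k₀ + 1) := by
      apply one_div_le_one_div_of_le (by positivity)
      have : (k₀ : ℝ) ≤ k := Nat.cast_le.mpr (le_max_right _ _)
      linarith
    linarith
  have hxsS : xs ∈ S := memS hmax
  have hFxs : F xs = ⟪xs, y⟫ - g y :=
    le_antisymm (Fle hmax) (by linarith [FYr y xs hxsS])
  have hcontN : Continuous N := N_continuous N hN
  have htends : Tendsto (fun k => w (σ k)) atTop (𝓝 xs) := htend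
  -- quadratic lower bound on the intrinsic interior
  have hquad_ri : ∀ x ∈ intrinsicInterior ℝ S,
      ⟪x, y⟫ - g y + β / 2 * N (x - xs) ^ 2 ≤ F x := by
    intro x hx
    have hxS : x ∈ S := intrinsicInterior_subset hx
    have hmain : ∀ α : ℝ, 0 < α → α < 1 →
        α * ((⟪x, y⟫ - F x - g y) + β / 2 * (1 - α) * N (x - xs) ^ 2) ≤ 0 := by
      intro α hα0 hα1
      have hk : ∀ k : ℕ,
          α * ((⟪x, y⟫ - F x - g y) + β / 2 * (1 - α) * N (x - w (σ k)) ^ 2)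
            ≤ 1 / (σ k + 1) := by
        intro k
        obtain ⟨hpmem, hpineq⟩ := hscr x hx (w (σ k)) (hwmem (σ k)) α hα0 hα1
        have hFY := FYr y _ hpmem
        have hinner : ⟪α • x + (1 - α) • w (σ k), y⟫
            = α * ⟪x, y⟫ + (1 - α) * ⟪w (σ k), y⟫ := by
          rw [inner_add_left, real_inner_smul_left, real_inner_smul_left]
        rw [hinner] at hFY
        have hφ := hwval (σ k)
        have h5 : (1 - α) * (g y - 1 / (σ k + 1)) ≤ (1 - α) * (⟪w (σ k), y⟫ - F (w (σ k))) :=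
          mul_le_mul_of_nonneg_left hφ.le (by linarith)
        have hs : (0:ℝ) < 1 / (σ k + 1) := by positivity
        have hαs : 0 ≤ α * (1 / ((σ k : ℝ) + 1)) := by positivity
        nlinarith [hpineq, hFY, h5, hs, hαs]
      have htendL : Tendsto
          (fun k => α * ((⟪x, y⟫ - F x - g y) + β / 2 * (1 - α) * N (x - w (σ k)) ^ 2))
          atTop (𝓝 (α * ((⟪x, y⟫ - F x - g y) + β / 2 * (1 - α) * N (x - xs) ^ 2))) := by
        apply Tendsto.const_mul
        apply Tendsto.const_add
        apply Tendsto.const_mul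
        apply Tendsto.pow
        exact (hcontN.tendsto _).comp (tendsto_const_nhds.sub htends)
      have htendR : Tendsto (fun k : ℕ => 1 / ((σ k : ℝ) + 1)) atTop (𝓝 0) := by
        apply squeeze_zero (fun k => by positivity) (fun k => ?_)
          tendsto_one_div_add_atTop_nhds_zero_nat
        apply one_div_le_one_div_of_le (by positivity)
        exact_mod_cast Nat.add_le_add_right hσ.le_apply 1
      exact le_of_tendsto_of_tendsto' htendL htendR hk
    have hQ : 0 ≤ β / 2 * N (x - xs) ^ 2 :=
      mul_nonneg (by linarith) (sq_nonneg _)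
    have h0 : (⟪x, y⟫ - F x - g y) + β / 2 * N (x - xs) ^ 2 ≤ 0 := by
      apply le_of_forall_pos_le_add
      intro ε hε
      set q := β / 2 * N (x - xs) ^ 2 with hq
      set α : ℝ := min (1/2) (ε / (q + 1)) with hα
      have hα0 : 0 < α := lt_min (by norm_num) (div_pos hε (by linarith))
      have hα1 : α < 1 := lt_of_le_of_lt (min_le_left _ _) (by norm_num)
      have hm1 : α * ((⟪x, y⟫ - F x - g y) + (1 - α) * q) ≤ 0 := by
        have h7 := hmain α hα0 hα1
        rw [hq]
        linarith [h7]
      have h1 : (⟪x, y⟫ - F x - g y) + (1 - α) * q ≤ 0 := by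
        by_contra hcon
        push_neg at hcon
        linarith [mul_pos hα0 hcon, hm1]
      have h2 : α * q ≤ ε := by
        have hle : α ≤ ε / (q + 1) := min_le_right _ _
        have h3 := mul_le_mul_of_nonneg_right hle hQ
        rw [div_mul_eq_mul_div] at h3
        have h4 : ε * q / (q + 1) ≤ ε := by
          rw [div_le_iff₀ (by linarith)]
          nlinarith
        calc α * q ≤ ε * q / (q + 1) := h3
        _ ≤ ε := h4
      linarith
    linarith
  -- quadratic lower bound on all of S
  have hquad : ∀ x, x ∈ S → ⟪x, y⟫ - g y + β / 2 * N (x - xs) ^ 2 ≤ F x := by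
    intro x hxS
    set a : ℕ → ℝ := fun k => 1 / (k + 1) with ha
    have ha0 : ∀ k, 0 < a k := fun k => by positivity
    have ha1 : ∀ k, a k ≤ 1 := fun k => by
      rw [ha]
      rw [div_le_one (by positivity)]
      linarith [Nat.cast_nonneg (α := ℝ) k]
    set xk : ℕ → X := fun k => a k • z₀ + (1 - a k) • x with hxk
    have hxkmem : ∀ k, xk k ∈ intrinsicInterior ℝ S := fun k =>
      combo_mem_intrinsicInterior hSconv hxS hz₀ (ha0 k) (ha1 k)
    have hL : ∀ k, ⟪xk k, y⟫ - g y + β / 2 * N (xk k - xs) ^ 2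
        ≤ a k * F z₀ + (1 - a k) * F x :=
      fun k => le_trans (hquad_ri _ (hxkmem k))
        (hconvr z₀ hz₀S x hxS (a k) (ha0 k).le (ha1 k)).2
    have hatend : Tendsto a atTop (𝓝 0) := tendsto_one_div_add_atTop_nhds_zero_nat
    have htendx : Tendsto xk atTop (𝓝 x) := by
      have h2 : Tendsto (fun k => a k • (z₀ - x)) atTop (𝓝 ((0:ℝ) • (z₀ - x))) :=
        hatend.smul_const _
      rw [zero_smul] at h2
      have h3 : Tendsto (fun k => x + a k • (z₀ - x)) atTop (𝓝 (x + 0)) :=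
        tendsto_const_nhds.add h2
      rw [add_zero] at h3
      have hxx : xk = fun k => x + a k • (z₀ - x) := by
        funext k
        rw [hxk]
        module
      rw [hxx]
      exact h3
    have htendL : Tendsto (fun k => ⟪xk k, y⟫ - g y + β / 2 * N (xk k - xs) ^ 2) atTop
        (𝓝 (⟪x, y⟫ - g y + β / 2 * N (x - xs) ^ 2)) := by
      apply Tendsto.add
      · exact (((continuous_id.inner continuous_const).tendsto x).comp htendx).sub
          tendsto_const_nhds
      · apply Tendsto.const_mul
        apply Tendsto.pow
        exact (hcontN.tendsto _).comp (htendx.sub tendsto_const_nhds)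
    have htendR : Tendsto (fun k => a k * F z₀ + (1 - a k) * F x) atTop (𝓝 (F x)) := by
      have h5 : Tendsto (fun k => a k * F z₀ + (1 - a k) * F x) atTop
          (𝓝 (0 * F z₀ + (1 - 0) * F x)) :=
        (hatend.mul_const _).add ((tendsto_const_nhds.sub hatend).mul_const _)
      rw [zero_mul, sub_zero, one_mul, zero_add] at h5
      exact h5
    exact le_of_tendsto_of_tendsto' htendL htendR hL
  -- the gradient of g at y is xs
  have hgrad : gradient g y = xs := by
    have hmin : ∀ z : X, g y - ⟪xs, y⟫ ≤ g z - ⟪xs, z⟫ := by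
      intro z
      have h1 := FYr z xs hxsS
      linarith [hFxs]
    have hloc : IsLocalMin (fun z => g z - ⟪xs, z⟫) y :=
      Filter.Eventually.of_forall fun z => hmin z
    have hfd := hloc.fderiv_eq_zero
    have hfd2 : fderiv ℝ (fun z : X => g z - ⟪xs, z⟫) y
        = fderiv ℝ g y - innerSL ℝ xs := by
      have h1 : fderiv ℝ (fun z : X => g z - (innerSL ℝ xs) z) y
          = fderiv ℝ g y - fderiv ℝ (fun z : X => (innerSL ℝ xs) z) y :=
        fderiv_sub (hgdiff y) ((innerSL ℝ xs).differentiable.differentiableAt)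
      rw [(innerSL ℝ xs).fderiv] at h1
      exact h1
    have hfg : fderiv ℝ g y = innerSL ℝ xs := by
      rw [hfd2] at hfd
      exact sub_eq_zero.mp hfd
    have hdual : (InnerProductSpace.toDual ℝ X) xs = innerSL ℝ xs := by
      ext z
      simp [InnerProductSpace.toDual_apply_apply]
    have hhas : HasFDerivAt g ((InnerProductSpace.toDual ℝ X) xs) y := by
      have h6 := (hgdiff y).hasFDerivAt
      rwa [hfg, ← hdual] at h6
    have h8 := hhas.hasGradientAt.gradient
    rwa [LinearIsometryEquiv.symm_apply_apply] at h8
  -- conclusion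
  set d : ℝ := dualNorm N v with hd
  have hub : ∀ x : X, ((⟪x, y + v⟫ : ℝ) : EReal) - f x
      ≤ ((g y + ⟪xs, v⟫ + 1 / (2 * β) * d ^ 2 : ℝ) : EReal) := by
    intro x
    by_cases hxS : x ∈ S
    · have hq2 := hquad x hxS
      have hfx : ((⟪x, y⟫ - g y + β / 2 * N (x - xs) ^ 2 : ℝ) : EReal) ≤ f x := by
        rw [hF x hxS]
        exact_mod_cast hq2
      apply ereal_sub_le hfx
      have hi1 : ⟪x, y + v⟫ = ⟪x, y⟫ + ⟪x, v⟫ := inner_add_right x y v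
      have hi2 : ⟪x - xs, v⟫ = ⟪x, v⟫ - ⟪xs, v⟫ := inner_sub_left x xs v
      have hi3 : ⟪x - xs, v⟫ ≤ N (x - xs) * d := inner_le_dualNorm N hN _ v
      have key : N (x - xs) * d - β / 2 * N (x - xs) ^ 2 ≤ 1 / (2 * β) * d ^ 2 := by
        have heq : 1 / (2 * β) * d ^ 2 = d ^ 2 / (2 * β) := by ring
        rw [heq, le_div_iff₀ (by linarith)]
        nlinarith [sq_nonneg (β * N (x - xs) - d)]
      linarith
    · have hxT : f x = ⊤ := not_not.mp hxS
      rw [hxT, EReal.sub_top]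
      exact bot_le
  have hfinal : (g (y + v) : EReal)
      ≤ ((g y + ⟪xs, v⟫ + 1 / (2 * β) * d ^ 2 : ℝ) : EReal) := by
    rw [hg (y + v)]
    exact iSup_le hub
  have hfinal2 : g (y + v) ≤ g y + ⟪xs, v⟫ + 1 / (2 * β) * d ^ 2 := by exact_mod_cast hfinal
  rw [hgrad]
  exact hfinal2


end SCAux

/-- The key inequality (Corollary 2.4): if `f` is `β`-strongly convex w.r.t. `N`, closed and
convex, with `f⋆(0) = 0`, and `g` is the (everywhere-finite, differentiable) function
representing the conjugate `f⋆`, then for any sequence `v_1, …, v_n` and any `u`,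
`∑ ⟪v_i, u⟫ - f(u) ≤ f⋆(v_{1:n}) ≤ ∑ ⟪∇f⋆(v_{1:i-1}), v_i⟫ + (1/(2β)) ∑ (dualNorm N (v_i))²`. -/
theorem stmt1 [FiniteDimensional ℝ X]
    (N : X → ℝ) (hN : IsNormOn N) (β : ℝ) (hβ : 0 < β)
    (f : X → EReal) (hfbot : ∀ x, f x ≠ ⊥) (hproper : ∃ x, f x ≠ ⊤)
    (hclosed : LowerSemicontinuous f) (hconv : ERealConvexOn f)
    (hsc : EStrongConvexOn N β f)
    (g : X → ℝ) (hg : ∀ y, (g y : EReal) = fenchelConj f y)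
    (hgdiff : Differentiable ℝ g) (hstar0 : g 0 = 0)
    (n : ℕ) (v : ℕ → X) (u : X) :
    ((↑(∑ i ∈ Finset.range n, ⟪v i, u⟫) : EReal) - f u
        ≤ ((g (∑ i ∈ Finset.range n, v i) : ℝ) : EReal)) ∧
      g (∑ i ∈ Finset.range n, v i) ≤
        (∑ i ∈ Finset.range n, ⟪gradient g (∑ j ∈ Finset.range i, v j), v i⟫)
          + 1 / (2 * β) * ∑ i ∈ Finset.range n, dualNorm N (v i) ^ 2 := by
  constructor
  · rw [hg]
    have h1 : (∑ i ∈ Finset.range n, ⟪v i, u⟫) = ⟪u, ∑ i ∈ Finset.range n, v i⟫ := by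
      rw [← sum_inner, real_inner_comm]
    rw [h1]
    exact le_iSup (fun x => ((⟪x, ∑ i ∈ Finset.range n, v i⟫ : ℝ) : EReal) - f x) u
  · induction n with
    | zero => simp [hstar0]
    | succ n ih =>
      rw [Finset.sum_range_succ, Finset.sum_range_succ, Finset.sum_range_succ]
      have hks := SCAux.key_step N hN β hβ f hfbot hproper hclosed hconv hsc g hg hgdiff
        (∑ i ∈ Finset.range n, v i) (v n)
      linarith [ih]
end

section
/- Let q ∈ [1,2] and d ≥ 1. The function f : ℝ^d → ℝ defined by f(w) = (1/2)‖w‖_q² is (q−1)-strongly convex with respect to the norm ‖·‖_q on ℝ^d; that is, for all w, u ∈ ℝ^d and α ∈ (0,1), f(αw + (1−α)u) ≤ αf(w) + (1−α)f(u) − ((q−1)/2)α(1−α)‖w−u‖_q². -/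
open scoped BigOperators

/-- The vector `q`-norm on `ℝ^d`: `‖w‖_q = (∑ i, |w i| ^ q) ^ (1/q)`. -/
noncomputable def pnorm {d : ℕ} (q : ℝ) (w : Fin d → ℝ) : ℝ :=
  (∑ i, |w i| ^ q) ^ (1 / q)

section StrongConvexAux

open Real Set Finset

lemma cont_rpow {c : ℝ} (hc : 0 ≤ c) : Continuous fun y : ℝ => y ^ c :=
  continuous_iff_continuousAt.mpr fun x => Real.continuousAt_rpow_const x c (Or.inr hc)

-- (a+x)^(q-2) + (a-x)^(q-2) ≥ 2 a^(q-2) for 0 < x < a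
lemma key0 {q a x : ℝ} (hq2 : q ≤ 2) (ha : 0 < a) (hx : 0 < x) (hxa : x < a) :
    2 * a ^ (q - 2) ≤ (a + x) ^ (q - 2) + (a - x) ^ (q - 2) := by
  have hax : (0:ℝ) < a + x := by linarith
  have hax' : (0:ℝ) < a - x := by linarith
  have h1 : 2 * ((a + x) ^ ((q-2)/2)) * ((a - x) ^ ((q-2)/2)) ≤
      ((a + x) ^ ((q-2)/2)) ^ 2 + ((a - x) ^ ((q-2)/2)) ^ 2 := two_mul_le_add_sq _ _
  have e1 : ((a + x) ^ ((q-2)/2)) ^ 2 = (a + x) ^ (q - 2) := by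
    rw [← Real.rpow_natCast ((a+x) ^ ((q-2)/2)) 2, ← Real.rpow_mul hax.le]
    norm_num
  have e2 : ((a - x) ^ ((q-2)/2)) ^ 2 = (a - x) ^ (q - 2) := by
    rw [← Real.rpow_natCast ((a-x) ^ ((q-2)/2)) 2, ← Real.rpow_mul hax'.le]
    norm_num
  have e3 : ((a + x) ^ ((q-2)/2)) * ((a - x) ^ ((q-2)/2)) = ((a+x)*(a-x)) ^ ((q-2)/2) :=
    (Real.mul_rpow hax.le hax'.le).symm
  have e4 : (a:ℝ) ^ (q - 2) = (a^2) ^ ((q-2)/2) := by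
    rw [← Real.rpow_natCast a 2, ← Real.rpow_mul ha.le]
    congr 1; ring
  have h2 : (a^2 : ℝ) ^ ((q-2)/2) ≤ ((a+x)*(a-x)) ^ ((q-2)/2) := by
    apply Real.rpow_le_rpow_of_nonpos (by nlinarith) (by nlinarith) (by linarith)
  calc 2 * a ^ (q-2) = 2 * ((a^2) ^ ((q-2)/2)) := by rw [e4]
    _ ≤ 2 * (((a+x)*(a-x)) ^ ((q-2)/2)) := by linarith
    _ = 2 * (((a + x) ^ ((q-2)/2)) * ((a - x) ^ ((q-2)/2))) := by rw [e3]
    _ ≤ _ := by rw [← e1, ← e2]; linarith [h1]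

lemma key1 {q a : ℝ} (hq1 : 1 ≤ q) (hq2 : q ≤ 2) (ha : 0 < a) {b : ℝ} (hb : 0 ≤ b)
    (hba : b < a) :
    2 * (q - 1) * b * a ^ (q - 2) ≤ (a + b) ^ (q - 1) - (a - b) ^ (q - 1) := by
  set φ : ℝ → ℝ := fun x => (a + x) ^ (q-1) - (a - x) ^ (q-1) - 2*(q-1)*x*a^(q-2) with hφ
  have hq10 : (0:ℝ) ≤ q - 1 := by linarith
  have hcont : Continuous φ := by
    apply Continuous.sub
    · exact ((cont_rpow hq10).comp (continuous_const.add continuous_id)).sub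
        ((cont_rpow hq10).comp (continuous_const.sub continuous_id))
    · continuity
  have hderiv : ∀ x ∈ Set.Ioo (0:ℝ) a, HasDerivAt φ
      ((q-1) * ((a + x) ^ (q-2) + (a - x) ^ (q-2) - 2 * a ^ (q-2))) x := by
    intro x hx
    have hax : a + x ≠ 0 := by nlinarith [hx.1, hx.2]
    have hax' : a - x ≠ 0 := by nlinarith [hx.1, hx.2]
    have h1 : HasDerivAt (fun y : ℝ => (a + y) ^ (q-1)) (1 * (q-1) * (a+x)^(q-1-1)) x :=
      (HasDerivAt.const_add a (hasDerivAt_id x)).rpow_const (Or.inl hax)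
    have h2 : HasDerivAt (fun y : ℝ => (a - y) ^ (q-1)) ((-1) * (q-1) * (a-x)^(q-1-1)) x :=
      (HasDerivAt.const_sub a (hasDerivAt_id x)).rpow_const (Or.inl hax')
    have h3 : HasDerivAt (fun y : ℝ => 2*(q-1)*y*a^(q-2)) (2*(q-1)*a^(q-2)) x := by
      simpa using (((hasDerivAt_id x).const_mul (2*(q-1))).mul_const (a^(q-2)))
    have := (h1.sub h2).sub h3
    refine this.congr_deriv ?_
    have : q - 1 - 1 = q - 2 := by ring
    rw [this]; ring
  have hmono : MonotoneOn φ (Set.Icc 0 a) := by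
    apply monotoneOn_of_deriv_nonneg (convex_Icc 0 a) hcont.continuousOn
    · intro x hx
      rw [interior_Icc] at hx
      exact (hderiv x hx).differentiableAt.differentiableWithinAt
    · intro x hx
      rw [interior_Icc] at hx
      rw [(hderiv x hx).deriv]
      have := key0 hq2 ha hx.1 hx.2
      nlinarith
  have h0 : φ 0 = 0 := by simp [hφ]
  have hb' : φ 0 ≤ φ b := hmono (Set.mem_Icc.mpr ⟨le_refl 0, ha.le⟩)
    (Set.mem_Icc.mpr ⟨hb, hba.le⟩) hb
  rw [h0] at hb'
  simp only [hφ] at hb'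
  linarith


lemma sq_rpow_half {a : ℝ} (ha : 0 ≤ a) (c : ℝ) : (a^2 : ℝ) ^ (c/2) = a ^ c := by
  rw [← Real.rpow_natCast a 2, ← Real.rpow_mul ha]
  congr 1; ring

section
variable {q : ℝ} (hq1 : 1 ≤ q) (hq2 : q ≤ 2)

include hq1 hq2 in
lemma core {a b : ℝ} (hb : 0 ≤ b) (hba : b ≤ a) :
    (a^2 + (q-1)*b^2) ^ (q/2) ≤ ((a+b)^q + (a-b)^q) / 2 := by
  have hq0 : (0:ℝ) < q := by linarith
  have hq10 : (0:ℝ) ≤ q - 1 := by linarith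
  have ha : 0 ≤ a := le_trans hb hba
  rcases eq_or_lt_of_le ha with h | ha
  · have hb0 : b = 0 := le_antisymm (by linarith) hb
    rw [← h, hb0]
    norm_num [Real.zero_rpow hq0.ne', Real.zero_rpow (show (q/2:ℝ) ≠ 0 from by positivity)]
  set g : ℝ → ℝ := fun x => ((a+x)^q + (a-x)^q)/2 - (a^2 + (q-1)*x^2)^(q/2) with hg
  have hBpos : ∀ x : ℝ, (0:ℝ) < a^2 + (q-1)*x^2 := fun x => by nlinarith
  have hcont : Continuous g := by
    apply Continuous.sub
    · apply Continuous.div_const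
      exact ((cont_rpow hq0.le).comp (continuous_const.add continuous_id)).add
        ((cont_rpow hq0.le).comp (continuous_const.sub continuous_id))
    · exact (cont_rpow (by positivity)).comp (by continuity)
  have hderiv : ∀ x ∈ Set.Ioo (0:ℝ) a, HasDerivAt g
      (q/2 * ((a+x)^(q-1) - (a-x)^(q-1)) - q*(q-1)*x*(a^2+(q-1)*x^2)^((q-2)/2)) x := by
    intro x hx
    have hax : a + x ≠ 0 := by nlinarith [hx.1, hx.2]
    have hax' : a - x ≠ 0 := by nlinarith [hx.1, hx.2]
    have h1 : HasDerivAt (fun y : ℝ => (a + y) ^ q) (1 * q * (a+x)^(q-1)) x :=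
      (HasDerivAt.const_add a (hasDerivAt_id x)).rpow_const (Or.inl hax)
    have h2 : HasDerivAt (fun y : ℝ => (a - y) ^ q) ((-1) * q * (a-x)^(q-1)) x :=
      (HasDerivAt.const_sub a (hasDerivAt_id x)).rpow_const (Or.inl hax')
    have h3 : HasDerivAt (fun y : ℝ => a^2 + (q-1)*y^2) (2*(q-1)*x) x := by
      have : HasDerivAt (fun y : ℝ => y^2) (2*x) x := by simpa using hasDerivAt_pow 2 x
      simpa [mul_comm, mul_assoc, mul_left_comm] using (this.const_mul (q-1)).const_add (a^2)
    have h4 : HasDerivAt (fun y : ℝ => (a^2 + (q-1)*y^2)^(q/2))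
        ((2*(q-1)*x) * (q/2) * (a^2+(q-1)*x^2)^(q/2-1)) x :=
      h3.rpow_const (Or.inl (ne_of_gt (hBpos x)))
    have := ((h1.add h2).div_const 2).sub h4
    refine this.congr_deriv ?_
    have : q/2 - 1 = (q-2)/2 := by ring
    rw [this]; ring
  have hmono : MonotoneOn g (Set.Icc 0 a) := by
    apply monotoneOn_of_deriv_nonneg (convex_Icc 0 a) hcont.continuousOn
    · intro x hx
      rw [interior_Icc] at hx
      exact (hderiv x hx).differentiableAt.differentiableWithinAt
    · intro x hx
      rw [interior_Icc] at hx
      rw [(hderiv x hx).deriv]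
      have hk := key1 hq1 hq2 ha hx.1.le hx.2
      have hB : (a^2 + (q-1)*x^2 : ℝ) ^ ((q-2)/2) ≤ a ^ (q-2) := by
        rw [← sq_rpow_half ha.le (q-2)]
        exact Real.rpow_le_rpow_of_nonpos (pow_pos ha 2) (by nlinarith) (by linarith)
      have hBnn : (0:ℝ) ≤ (a^2 + (q-1)*x^2 : ℝ) ^ ((q-2)/2) := (Real.rpow_nonneg (hBpos x).le _)
      nlinarith [hx.1, mul_le_mul_of_nonneg_left hB
        (mul_nonneg (mul_nonneg hq0.le hq10) hx.1.le : (0:ℝ) ≤ q*(q-1)*x)]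
  have h0 : g 0 = 0 := by
    show ((a+0)^q + (a-0)^q)/2 - (a^2 + (q-1)*0^2)^(q/2) = 0
    rw [add_zero, sub_zero]
    have e : (a^2 + (q-1)*0^2 : ℝ) = a^2 := by ring
    rw [e, sq_rpow_half ha.le q]
    ring
  have hgb : g 0 ≤ g b := hmono (Set.mem_Icc.mpr ⟨le_refl 0, ha.le⟩)
    (Set.mem_Icc.mpr ⟨hb, hba⟩) hb
  rw [h0] at hgb
  simp only [hg] at hgb
  linarith

end

section
variable {q : ℝ} (hq1 : 1 ≤ q) (hq2 : q ≤ 2)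

include hq1 hq2 in
lemma scalar_nonneg {A B : ℝ} (hA : 0 ≤ A) (hB : 0 ≤ B) :
    (A^2 + (q-1)*B^2)^(q/2) ≤ ((A+B)^q + |A-B|^q)/2 := by
  rcases le_total B A with h | h
  · rw [abs_of_nonneg (by linarith)]; exact core hq1 hq2 hB h
  · rw [abs_of_nonpos (by linarith), neg_sub]
    calc (A^2 + (q-1)*B^2)^(q/2) ≤ (B^2 + (q-1)*A^2)^(q/2) := by
          have hAB : A^2 ≤ B^2 := by nlinarith
          apply Real.rpow_le_rpow (by nlinarith)
            (by nlinarith [mul_nonneg (sub_nonneg.2 hAB) (sub_nonneg.2 hq2)]) (by positivity)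
      _ ≤ ((B+A)^q + (B-A)^q)/2 := core hq1 hq2 hA h
      _ = ((A+B)^q + (B-A)^q)/2 := by rw [add_comm B A]

include hq1 hq2 in
lemma scalar (a b : ℝ) :
    (a^2 + (q-1)*b^2)^(q/2) ≤ (|a+b|^q + |a-b|^q)/2 := by
  have h := scalar_nonneg hq1 hq2 (abs_nonneg a) (abs_nonneg b)
  rw [sq_abs, sq_abs] at h
  refine le_trans h (le_of_eq ?_)
  have key : (|a|+|b|)^q + |(|a|-|b|)|^q = |a+b|^q + |a-b|^q := by
    rcases le_total 0 a with ha | ha <;> rcases le_total 0 b with hb | hb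
    · rw [abs_of_nonneg ha, abs_of_nonneg hb, abs_of_nonneg (add_nonneg ha hb)]
    · rw [abs_of_nonneg ha, abs_of_nonpos hb,
        show (a + -b : ℝ) = a - b from by ring,
        show (a - -b : ℝ) = a + b from by ring,
        abs_of_nonneg (show (0:ℝ) ≤ a - b by linarith), add_comm]
    · rw [abs_of_nonpos ha, abs_of_nonneg hb,
        show (-a + b : ℝ) = -(a-b) from by ring,
        show (-a - b : ℝ) = -(a+b) from by ring, abs_neg,
        ← abs_of_nonpos (show (a - b : ℝ) ≤ 0 by linarith), add_comm]
    · rw [abs_of_nonpos ha, abs_of_nonpos hb,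
        show (-a + -b : ℝ) = -(a+b) from by ring,
        show (-a - -b : ℝ) = -(a-b) from by ring, abs_neg,
        ← abs_of_nonpos (show (a + b : ℝ) ≤ 0 by linarith)]
  rw [key]

include hq1 hq2 in
lemma scalar_mid (x y : ℝ) :
    (((x+y)/2)^2 + (q-1)*((x-y)/2)^2)^(q/2) ≤ (|x|^q + |y|^q)/2 := by
  have h := scalar hq1 hq2 ((x+y)/2) ((x-y)/2)
  rw [show ((x+y)/2 + (x-y)/2 : ℝ) = x from by ring,
    show ((x+y)/2 - (x-y)/2 : ℝ) = y from by ring] at h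
  exact h

end

lemma Lp_pair_nn {p : ℝ} (hp : 1 ≤ p) (X Y U V : NNReal) :
    ((X+U)^p + (Y+V)^p)^(1/p) ≤ (X^p+Y^p)^(1/p) + (U^p+V^p)^(1/p) := by
  have := NNReal.Lp_add_le (Finset.univ : Finset (Fin 2)) ![X,Y] ![U,V] hp
  simpa [Fin.sum_univ_two] using this

lemma Lp_pair {p : ℝ} (hp : 1 ≤ p) {x y u v : ℝ} (hx : 0 ≤ x) (hy : 0 ≤ y) (hu : 0 ≤ u)
    (hv : 0 ≤ v) :
    ((x+u)^p + (y+v)^p)^(1/p) ≤ (x^p+y^p)^(1/p) + (u^p+v^p)^(1/p) := by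
  lift x to NNReal using hx
  lift y to NNReal using hy
  lift u to NNReal using hu
  lift v to NNReal using hv
  have := Lp_pair_nn hp x y u v
  rw [← NNReal.coe_le_coe] at this
  push_cast [NNReal.coe_rpow] at this
  convert this using 3 <;> norm_cast

lemma mink {p : ℝ} (hp : 1 ≤ p) {ι : Type*} (s : Finset ι) (f g : ι → ℝ)
    (hf : ∀ i, 0 ≤ f i) (hg : ∀ i, 0 ≤ g i) :
    ((∑ i ∈ s, f i)^p + (∑ i ∈ s, g i)^p)^(1/p) ≤ ∑ i ∈ s, (f i^p + g i^p)^(1/p) := by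
  have hp0 : p ≠ 0 := by positivity
  induction s using Finset.cons_induction with
  | empty => simp [Real.zero_rpow hp0, Real.zero_rpow (inv_ne_zero hp0)]
  | cons a s ha ih =>
      rw [Finset.sum_cons, Finset.sum_cons, Finset.sum_cons]
      calc ((f a + ∑ i ∈ s, f i)^p + (g a + ∑ i ∈ s, g i)^p)^(1/p)
          ≤ (f a^p + g a^p)^(1/p) + ((∑ i ∈ s, f i)^p + (∑ i ∈ s, g i)^p)^(1/p) :=
            Lp_pair hp (hf a) (hg a) (Finset.sum_nonneg fun i _ => hf i)
              (Finset.sum_nonneg fun i _ => hg i)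
        _ ≤ _ := by exact add_le_add (le_refl _) ih

lemma pm {q : ℝ} (hq1 : 1 ≤ q) (hq2 : q ≤ 2) {A B : ℝ} (hA : 0 ≤ A) (hB : 0 ≤ B) :
    ((A^q + B^q)/2)^(2/q) ≤ (A^2 + B^2)/2 := by
  have hq0 : (0:ℝ) < q := by linarith
  have hp : (1:ℝ) ≤ 2/q := by rw [le_div_iff₀ hq0]; linarith
  have h := Real.arith_mean_le_rpow_mean (Finset.univ : Finset (Fin 2)) ![1/2,1/2]
    ![A^q,B^q] (by intro i _; fin_cases i <;> norm_num)
    (by simp [Fin.sum_univ_two]; norm_num)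
    (by intro i _; fin_cases i <;> simp [Real.rpow_nonneg hA, Real.rpow_nonneg hB]) hp
  simp only [Fin.sum_univ_two] at h
  have eA : ((A^q : ℝ))^(2/q) = A^2 := by
    rw [← Real.rpow_mul hA, show q * (2/q) = ((2:ℕ):ℝ) from by field_simp; norm_num, Real.rpow_natCast]
  have eB : ((B^q : ℝ))^(2/q) = B^2 := by
    rw [← Real.rpow_mul hB, show q * (2/q) = ((2:ℕ):ℝ) from by field_simp; norm_num, Real.rpow_natCast]
  simp only [Matrix.cons_val_zero, Matrix.cons_val_one, Matrix.head_cons] at h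
  rw [eA, eB] at h
  have h2 := Real.rpow_le_rpow (by positivity) h (by positivity : (0:ℝ) ≤ 2/q)
  calc ((A^q + B^q)/2)^(2/q) = (1/2*A^q + 1/2*B^q)^(2/q) := by
        rw [show (A^q+B^q)/2 = 1/2*A^q + 1/2*B^q from by ring]
    _ ≤ ((1/2*A^2 + 1/2*B^2)^(1/(2/q)))^(2/q) := h2
    _ = (A^2+B^2)/2 := by
        rw [← Real.rpow_mul (by positivity), show 1/(2/q) * (2/q) = 1 from by field_simp,
          Real.rpow_one]; ring

section
variable {q : ℝ} (hq1 : 1 ≤ q) (hq2 : q ≤ 2) {d : ℕ}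

lemma sum_abs_rpow_nonneg (hq0 : 0 < q) (z : Fin d → ℝ) : 0 ≤ ∑ i, |z i| ^ q :=
  Finset.sum_nonneg fun i _ => Real.rpow_nonneg (abs_nonneg _) _

lemma pnorm_sq (hq0 : 0 < q) (z : Fin d → ℝ) :
    (pnorm q z)^2 = (∑ i, |z i| ^ q) ^ (2/q) := by
  rw [pnorm, ← Real.rpow_natCast ((∑ i, |z i| ^ q) ^ (1/q)) 2,
    ← Real.rpow_mul (sum_abs_rpow_nonneg hq0 z)]
  congr 1
  push_cast; field_simp

include hq1 hq2 in
lemma mid (x y : Fin d → ℝ) :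
    (pnorm q (fun i => (x i + y i)/2))^2 + (q-1) * (pnorm q (fun i => (x i - y i)/2))^2
      ≤ ((pnorm q x)^2 + (pnorm q y)^2)/2 := by
  have hq0 : (0:ℝ) < q := by linarith
  have hq10 : (0:ℝ) ≤ q - 1 := by linarith
  have hp : (1:ℝ) ≤ 2/q := by rw [le_div_iff₀ hq0]; linarith
  have hp0 : (0:ℝ) < 2/q := by positivity
  set S1 := ∑ i, |(x i + y i)/2| ^ q with hS1
  set S2 := ∑ i, |(x i - y i)/2| ^ q with hS2
  set Sx := ∑ i, |x i| ^ q with hSx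
  set Sy := ∑ i, |y i| ^ q with hSy
  have hS1n : 0 ≤ S1 := sum_abs_rpow_nonneg hq0 _
  have hS2n : 0 ≤ S2 := sum_abs_rpow_nonneg hq0 _
  have hSxn : 0 ≤ Sx := sum_abs_rpow_nonneg hq0 _
  have hSyn : 0 ≤ Sy := sum_abs_rpow_nonneg hq0 _
  rw [pnorm_sq hq0, pnorm_sq hq0, pnorm_sq hq0, pnorm_sq hq0]
  -- goal : S1^(2/q) + (q-1) * S2^(2/q) ≤ (Sx^(2/q) + Sy^(2/q))/2
  have hmink := mink hp Finset.univ (fun i => |(x i + y i)/2| ^ q)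
    (fun i => (q-1)^(q/2) * |(x i - y i)/2| ^ q)
    (fun i => Real.rpow_nonneg (abs_nonneg _) _)
    (fun i => mul_nonneg (Real.rpow_nonneg hq10 _) (Real.rpow_nonneg (abs_nonneg _) _))
  rw [← Finset.mul_sum] at hmink
  have e2 : (((q-1)^(q/2) * S2) : ℝ)^(2/q) = (q-1) * S2^(2/q) := by
    rw [Real.mul_rpow (Real.rpow_nonneg hq10 _) hS2n, ← Real.rpow_mul hq10,
      show q/2*(2/q) = 1 from by field_simp, Real.rpow_one]
  rw [e2] at hmink
  set X := S1^(2/q) + (q-1) * S2^(2/q) with hX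
  have hXn : 0 ≤ X := by positivity
  have hZ : ∑ i : Fin d, ((|(x i + y i)/2| ^ q)^(2/q) + ((q-1)^(q/2) * |(x i - y i)/2| ^ q)^(2/q))^(1/(2/q))
      ≤ (Sx + Sy)/2 := by
    rw [hSx, hSy, ← Finset.sum_add_distrib, Finset.sum_div]
    apply Finset.sum_le_sum
    intro i _
    have em : ((|(x i + y i)/2| ^ q : ℝ))^(2/q) = ((x i + y i)/2)^2 := by
      rw [← Real.rpow_mul (abs_nonneg _), show q*(2/q) = ((2:ℕ):ℝ) from by field_simp; norm_num,
        Real.rpow_natCast, sq_abs]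
    have en : (((q-1)^(q/2) * |(x i - y i)/2| ^ q : ℝ))^(2/q)
        = (q-1) * ((x i - y i)/2)^2 := by
      rw [Real.mul_rpow (Real.rpow_nonneg hq10 _) (Real.rpow_nonneg (abs_nonneg _) _),
        ← Real.rpow_mul hq10, show q/2*(2/q) = 1 from by field_simp, Real.rpow_one,
        ← Real.rpow_mul (abs_nonneg _), show q*(2/q) = ((2:ℕ):ℝ) from by field_simp; norm_num,
        Real.rpow_natCast, sq_abs]
    rw [em, en, show (1:ℝ)/(2/q) = q/2 from by field_simp]
    exact scalar_mid hq1 hq2 (x i) (y i)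
  have hXle : X^(1/(2/q)) ≤ (Sx + Sy)/2 := le_trans hmink hZ
  have hX2 : X ≤ ((Sx + Sy)/2)^(2/q) := by
    have := Real.rpow_le_rpow (Real.rpow_nonneg hXn _) hXle hp0.le
    rwa [← Real.rpow_mul hXn, show 1/(2/q)*(2/q) = 1 from by field_simp, Real.rpow_one] at this
  refine le_trans hX2 ?_
  have hA : (0:ℝ) ≤ Sx^(1/q) := Real.rpow_nonneg hSxn _
  have hB : (0:ℝ) ≤ Sy^(1/q) := Real.rpow_nonneg hSyn _
  have := pm hq1 hq2 hA hB
  rw [← Real.rpow_mul hSxn, ← Real.rpow_mul hSyn] at this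
  rw [show 1/q*q = 1 from by field_simp, Real.rpow_one, Real.rpow_one] at this
  have eA2 : (Sx^(1/q))^2 = Sx^(2/q) := by
    rw [← Real.rpow_natCast (Sx^(1/q)) 2, ← Real.rpow_mul hSxn]
    congr 1; push_cast; field_simp
  have eB2 : (Sy^(1/q))^2 = Sy^(2/q) := by
    rw [← Real.rpow_natCast (Sy^(1/q)) 2, ← Real.rpow_mul hSyn]
    congr 1; push_cast; field_simp
  rw [eA2, eB2] at this
  exact this

end

lemma midpoint_to_all {g : ℝ → ℝ} (hc : Continuous g) (h0 : g 0 = 0) (h1 : g 1 = 0)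
    (hm : ∀ s t : ℝ, g ((s+t)/2) ≤ (g s + g t)/2) :
    ∀ α ∈ Set.Icc (0:ℝ) 1, g α ≤ 0 := by
  intro α hα
  by_contra hpos
  push_neg at hpos
  obtain ⟨t₀, ht₀K, ht₀max⟩ := isCompact_Icc.exists_isMaxOn
    (Set.nonempty_Icc.mpr zero_le_one) hc.continuousOn
  set M := g t₀ with hM
  have hMpos : 0 < M := lt_of_lt_of_le hpos (ht₀max hα)
  set T := Set.Icc (0:ℝ) 1 ∩ g ⁻¹' {M} with hT
  have hTclosed : IsClosed T := isClosed_Icc.inter (isClosed_singleton.preimage hc)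
  have hTne : T.Nonempty := ⟨t₀, ht₀K, rfl⟩
  have hTbdd : BddBelow T := ⟨0, fun t ht => ht.1.1⟩
  set t₁ := sInf T with ht₁def
  have ht₁T : t₁ ∈ T := hTclosed.csInf_mem hTne hTbdd
  have ht₁M : g t₁ = M := ht₁T.2
  have ht₁0 : t₁ ≠ 0 := fun h => by rw [h, h0] at ht₁M; linarith
  have ht₁1 : t₁ ≠ 1 := fun h => by rw [h, h1] at ht₁M; linarith
  have ht₁mem := ht₁T.1
  have h0t : 0 < t₁ := lt_of_le_of_ne ht₁mem.1 (Ne.symm ht₁0)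
  have ht1 : t₁ < 1 := lt_of_le_of_ne ht₁mem.2 ht₁1
  set ε := min t₁ (1 - t₁) with hε
  have hεpos : 0 < ε := lt_min h0t (by linarith)
  have hε1 : ε ≤ t₁ := min_le_left _ _
  have hε2 : ε ≤ 1 - t₁ := min_le_right _ _
  have hsmem : t₁ - ε ∈ Set.Icc (0:ℝ) 1 := ⟨by linarith, by linarith⟩
  have htmem : t₁ + ε ∈ Set.Icc (0:ℝ) 1 := ⟨by linarith, by linarith⟩
  have hmid := hm (t₁ - ε) (t₁ + ε)
  rw [show (t₁ - ε + (t₁ + ε))/2 = t₁ from by ring, ht₁M] at hmid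
  have hle : g (t₁ + ε) ≤ M := ht₀max htmem
  have hge : M ≤ g (t₁ - ε) := by linarith
  have hsT : t₁ - ε ∈ T := ⟨hsmem, le_antisymm (ht₀max hsmem) hge⟩
  have : t₁ ≤ t₁ - ε := csInf_le hTbdd hsT
  linarith



section
variable {q : ℝ} {d : ℕ}

lemma pnorm_smul_sq (hq0 : 0 < q) (c : ℝ) (v : Fin d → ℝ) :
    (pnorm q (fun i => c * v i))^2 = c^2 * (pnorm q v)^2 := by
  rw [pnorm_sq hq0, pnorm_sq hq0]
  rw [Finset.sum_congr rfl (fun i _ => show |c * v i|^q = |c|^q * |v i|^q from by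
    rw [abs_mul, Real.mul_rpow (abs_nonneg _) (abs_nonneg _)])]
  rw [← Finset.mul_sum,
    Real.mul_rpow (Real.rpow_nonneg (abs_nonneg c) q) (sum_abs_rpow_nonneg hq0 v),
    ← Real.rpow_mul (abs_nonneg c), show q*(2/q) = ((2:ℕ):ℝ) from by push_cast; field_simp,
    Real.rpow_natCast, sq_abs]

lemma contN (hq0 : 0 < q) (u v : Fin d → ℝ) :
    Continuous fun t : ℝ => (pnorm q (fun i => u i + t * v i))^2 := by
  have h1 : Continuous fun t : ℝ => ∑ i, |u i + t * v i|^q :=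
    continuous_finset_sum _ (fun i _ => (cont_rpow hq0.le).comp
      (continuous_abs.comp (continuous_const.add (continuous_id.mul continuous_const))))
  exact ((cont_rpow (by positivity : (0:ℝ) ≤ 1/q)).comp h1).pow 2

end

end StrongConvexAux

/-- For `q ∈ [1,2]`, the function `f(w) = (1/2) ‖w‖_q²` is `(q-1)`-strongly convex
with respect to `‖·‖_q` on `ℝ^d`. -/
theorem stmt5 (d : ℕ) (hd : 1 ≤ d) (q : ℝ) (hq1 : 1 ≤ q) (hq2 : q ≤ 2)
    (w u : Fin d → ℝ) (α : ℝ) (hα0 : 0 < α) (hα1 : α < 1) :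
    (1 / 2 : ℝ) * pnorm q (α • w + (1 - α) • u) ^ 2 ≤
      α * ((1 / 2 : ℝ) * pnorm q w ^ 2) + (1 - α) * ((1 / 2 : ℝ) * pnorm q u ^ 2)
        - (q - 1) / 2 * α * (1 - α) * pnorm q (w - u) ^ 2 := by
  have hq0 : (0:ℝ) < q := by linarith
  set v : Fin d → ℝ := w - u with hv
  set c : ℝ := (pnorm q (w - u))^2 with hc
  set Nw : ℝ := (pnorm q w)^2 with hNw
  set Nu : ℝ := (pnorm q u)^2 with hNu
  set L : ℝ := Nw - (q-1)*c - Nu with hL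
  set g : ℝ → ℝ := fun t => (pnorm q (fun i => u i + t * v i))^2 - (q-1)*t^2*c - t*L - Nu
    with hg
  have hvw : ∀ i, v i = w i - u i := fun i => rfl
  have hg0 : g 0 = 0 := by
    have e : (fun i => u i + (0:ℝ) * v i) = u := funext fun i => by ring
    simp only [hg, e]
    rw [← hNu]; ring
  have hg1 : g 1 = 0 := by
    have e : (fun i => u i + (1:ℝ) * v i) = w := funext fun i => by
      rw [hvw i]; ring
    simp only [hg, e]
    rw [← hNw, hL]; ring
  have hm : ∀ s t : ℝ, g ((s+t)/2) ≤ (g s + g t)/2 := by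
    intro s t
    have hmid := mid hq1 hq2 (fun i => u i + s * v i) (fun i => u i + t * v i)
    have e1 : (fun i => ((fun i => u i + s * v i) i + (fun i => u i + t * v i) i)/2)
        = (fun i => u i + ((s+t)/2) * v i) := funext fun i => by simp only; ring
    have e2 : (fun i => ((fun i => u i + s * v i) i - (fun i => u i + t * v i) i)/2)
        = (fun i => ((s-t)/2) * v i) := funext fun i => by simp only; ring
    rw [e1, e2, pnorm_smul_sq hq0] at hmid
    have hvc : (pnorm q v)^2 = c := by rw [hc, hv]
    rw [hvc] at hmid
    simp only [hg]
    have hq10 : (0:ℝ) ≤ q - 1 := by linarith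
    nlinarith [hmid]
  have hgcont : Continuous g := by
    apply Continuous.sub
    apply Continuous.sub
    apply Continuous.sub
    · exact contN hq0 u v
    · exact (continuous_const.mul (continuous_pow 2)).mul continuous_const
    · exact continuous_id.mul continuous_const
    · exact continuous_const
  have hα := midpoint_to_all hgcont hg0 hg1 hm α ⟨hα0.le, hα1.le⟩
  have eα : (α • w + (1 - α) • u) = (fun i => u i + α * v i) := funext fun i => by
    simp only [Pi.add_apply, Pi.smul_apply, smul_eq_mul, hvw i]; ring
  rw [eα]
  simp only [hg] at hα
  nlinarith [hα]
end

section
/- Let Ψ be an absolutely symmetric norm on ℝ^m and Φ an absolutely symmetric norm on ℝ^n such that the function (Φ²∘√)(x) := Φ(√x_1, …, √x_n)², defined for x in the nonnegative orthant and extended by (Φ²∘√)(x) = Φ(√|x_1|,…,√|x_n|)², is a norm on ℝ^n. Suppose Ψ² is σ₁-smooth w.r.t. Ψ and Φ² is σ₂-smooth w.r.t. Φ, in the sense that for all vectors x, y and all α ∈ [0,1], Ψ²(αx + (1−α)y) ≥ αΨ²(x) + (1−α)Ψ²(y) − (σ₁/2)α(1−α)Ψ²(x−y), and similarly for Φ.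 Define the group norm ‖X‖_{Ψ,Φ} := Φ(Ψ(X¹), …, Ψ(Xⁿ)) for X ∈ ℝ^{m×n} with columns X¹, …, Xⁿ. Then ‖·‖²_{Ψ,Φ} is (σ₁+σ₂)-smooth w.r.t. ‖·‖_{Ψ,Φ}: for all X, Y ∈ ℝ^{m×n} and α ∈ [0,1], ‖αX + (1−α)Y‖²_{Ψ,Φ} ≥ α‖X‖²_{Ψ,Φ} + (1−α)‖Y‖²_{Ψ,Φ} − ((σ₁+σ₂)/2)α(1−α)‖X−Y‖²_{Ψ,Φ}. -/
open scoped BigOperators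

/-- `Φ` is an absolutely symmetric norm: a norm invariant under arbitrary permutations and
sign changes of the components of its argument. -/
def AbsSymmNorm {n : ℕ} (Φ : (Fin n → ℝ) → ℝ) : Prop :=
  IsNormOn Φ ∧ ∀ (σ : Equiv.Perm (Fin n)) (x : Fin n → ℝ), Φ (fun i => |x (σ i)|) = Φ x

private lemma normOn_zero {V : Type*} [AddCommGroup V] [Module ℝ V] {N : V → ℝ}
    (h : IsNormOn N) : N 0 = 0 := by
  have h2 := h.2.2.1 0 (0 : V)
  simpa using h2

private lemma normOn_neg {V : Type*} [AddCommGroup V] [Module ℝ V] {N : V → ℝ}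
    (h : IsNormOn N) (x : V) : N (-x) = N x := by
  have h2 := h.2.2.1 (-1) x
  simpa using h2

private lemma normOn_sub_le {V : Type*} [AddCommGroup V] [Module ℝ V] {N : V → ℝ}
    (h : IsNormOn N) (x y : V) : N x - N y ≤ N (x - y) := by
  have h2 := h.2.2.2 (x - y) y
  simp only [sub_add_cancel] at h2
  linarith

private lemma comb_le {V : Type*} [AddCommGroup V] [Module ℝ V] {N : V → ℝ}
    (h : IsNormOn N) (a b : ℝ) (ha : 0 ≤ a) (hb : 0 ≤ b) (x y : V) :
    N (a • x + b • y) ≤ a * N x + b * N y := by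
  calc N (a • x + b • y) ≤ N (a • x) + N (b • y) := h.2.2.2 _ _
    _ = a * N x + b * N y := by
        rw [h.2.2.1, h.2.2.1, abs_of_nonneg ha, abs_of_nonneg hb]

private lemma absEq {k : ℕ} {Φ : (Fin k → ℝ) → ℝ} (h : AbsSymmNorm Φ) (x : Fin k → ℝ) :
    Φ (fun i => |x i|) = Φ x := h.2 (Equiv.refl _) x

private lemma update_le {k : ℕ} {Φ : (Fin k → ℝ) → ℝ} (h : AbsSymmNorm Φ)
    (z : Fin k → ℝ) (i : Fin k) (c : ℝ) (hc : |c| ≤ |z i|) :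
    Φ (Function.update z i c) ≤ Φ z := by
  rcases eq_or_ne (z i) 0 with h0 | h0
  · have hc0 : c = 0 := by
      rw [h0, abs_zero] at hc
      exact abs_eq_zero.mp (le_antisymm hc (abs_nonneg c))
    rw [hc0, ← h0, Function.update_eq_self]
  · set t := c / z i with ht
    have hct : c = t * z i := by rw [ht, div_mul_cancel₀ c h0]
    have ht1 : |t| ≤ 1 := by
      rw [ht, abs_div]
      exact div_le_one_of_le₀ hc (abs_nonneg _)
    obtain ⟨ht1a, ht1b⟩ := abs_le.mp ht1
    set w := Function.update z i (-z i) with hwdef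
    have hw : Φ w = Φ z := by
      rw [← absEq h w, ← absEq h z]
      congr 1; funext j
      rcases eq_or_ne j i with rfl | hj
      · simp [hwdef]
      · simp [hwdef, Function.update_of_ne hj]
    have hdecomp : Function.update z i c = ((1+t)/2) • z + ((1-t)/2) • w := by
      funext j
      rcases eq_or_ne j i with rfl | hj
      · simp [hwdef, Pi.add_apply, Pi.smul_apply, smul_eq_mul]
        rw [hct]; ring
      · simp [hwdef, Function.update_of_ne hj, Pi.add_apply, Pi.smul_apply, smul_eq_mul]
        ring
    rw [hdecomp]
    have hcb := comb_le h.1 ((1+t)/2) ((1-t)/2) (by linarith) (by linarith) z w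
    rw [hw] at hcb
    calc Φ (((1+t)/2) • z + ((1-t)/2) • w) ≤ (1+t)/2 * Φ z + (1-t)/2 * Φ z := hcb
      _ = Φ z := by ring

private lemma absSymm_mono {k : ℕ} {Φ : (Fin k → ℝ) → ℝ} (h : AbsSymmNorm Φ)
    {x y : Fin k → ℝ} (hxy : ∀ i, |x i| ≤ |y i|) : Φ x ≤ Φ y := by
  suffices H : ∀ s : Finset (Fin k), ∀ x : Fin k → ℝ, (∀ i, |x i| ≤ |y i|) →
      (∀ i, i ∉ s → x i = y i) → Φ x ≤ Φ y by
    exact H Finset.univ x hxy (fun i hi => absurd (Finset.mem_univ i) hi)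
  intro s
  induction s using Finset.induction_on with
  | empty =>
    intro x hle heq
    rw [show x = y from funext fun i => heq i (Finset.notMem_empty i)]
  | @insert a s ha ih =>
    intro x hle heq
    have h1 : Φ x ≤ Φ (Function.update x a (y a)) := by
      have hx : x = Function.update (Function.update x a (y a)) a (x a) := by
        funext j
        rcases eq_or_ne j a with rfl | hj
        · simp
        · simp [Function.update_of_ne hj]
      nth_rewrite 1 [hx]
      apply update_le h
      rw [Function.update_self]
      exact hle a
    refine h1.trans (ih (Function.update x a (y a)) ?_ ?_)
    · intro i
      rcases eq_or_ne i a with rfl | hi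
      · simp
      · rw [Function.update_of_ne hi]; exact hle i
    · intro i hi
      rcases eq_or_ne i a with rfl | hia
      · simp
      · rw [Function.update_of_ne hia]
        exact heq i (by simp [Finset.mem_insert, hia]; exact hi)

private lemma amqm {a b α : ℝ} (ha : 0 ≤ a) (hb : 0 ≤ b) (h0 : 0 ≤ α) (h1 : α ≤ 1) :
    α * a + (1 - α) * b ≤ Real.sqrt (α * a ^ 2 + (1 - α) * b ^ 2) := by
  have h2 : (α * a + (1 - α) * b) ^ 2 ≤ α * a ^ 2 + (1 - α) * b ^ 2 := by
    nlinarith [sq_nonneg (a - b), mul_nonneg h0 (sub_nonneg.mpr h1)]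
  have h3 : 0 ≤ α * a + (1 - α) * b := by
    have := mul_nonneg h0 ha
    have := mul_nonneg (sub_nonneg.mpr h1) hb
    linarith
  have h4 : 0 ≤ α * a ^ 2 + (1 - α) * b ^ 2 := by
    nlinarith [sq_nonneg a, sq_nonneg b]
  exact (Real.le_sqrt h3 h4).mpr h2

/-- Group-norm smoothness: if `Ψ, Φ` are absolutely symmetric norms, `Φ²∘√` is a norm
(`Φ` is a Q-norm), `Ψ²` is `σ₁`-smooth w.r.t. `Ψ` and `Φ²` is `σ₂`-smooth w.r.t. `Φ`, then
the square of the group norm `‖X‖_{Ψ,Φ} = Φ(Ψ(X¹),…,Ψ(Xⁿ))` (applied to the columns of `X`)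
is `(σ₁+σ₂)`-smooth w.r.t. `‖·‖_{Ψ,Φ}`. -/
theorem stmt9 (m n : ℕ) (Ψ : (Fin m → ℝ) → ℝ) (Φ : (Fin n → ℝ) → ℝ)
    (hΨ : AbsSymmNorm Ψ) (hΦ : AbsSymmNorm Φ)
    (hQ : IsNormOn fun x : Fin n → ℝ => Φ (fun i => Real.sqrt |x i|) ^ 2)
    (σ₁ σ₂ : ℝ)
    (hΨs : ∀ (x y : Fin m → ℝ) (α : ℝ), 0 ≤ α → α ≤ 1 →
      α * Ψ x ^ 2 + (1 - α) * Ψ y ^ 2 - σ₁ / 2 * α * (1 - α) * Ψ (x - y) ^ 2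
        ≤ Ψ (α • x + (1 - α) • y) ^ 2)
    (hΦs : ∀ (x y : Fin n → ℝ) (α : ℝ), 0 ≤ α → α ≤ 1 →
      α * Φ x ^ 2 + (1 - α) * Φ y ^ 2 - σ₂ / 2 * α * (1 - α) * Φ (x - y) ^ 2
        ≤ Φ (α • x + (1 - α) • y) ^ 2) :
    ∀ (A B : Matrix (Fin m) (Fin n) ℝ) (α : ℝ), 0 ≤ α → α ≤ 1 →
      α * Φ (fun j => Ψ (fun i => A i j)) ^ 2 + (1 - α) * Φ (fun j => Ψ (fun i => B i j)) ^ 2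
        - (σ₁ + σ₂) / 2 * α * (1 - α) * Φ (fun j => Ψ (fun i => A i j - B i j)) ^ 2
      ≤ Φ (fun j => Ψ (fun i => (α • A + (1 - α) • B) i j)) ^ 2 := by
  intro A B α hα0 hα1
  by_cases hm : m = 0
  · -- Ψ is identically zero
    subst hm
    have hz : ∀ x : Fin 0 → ℝ, Ψ x = 0 := fun x => by
      rw [Subsingleton.elim x 0]; exact normOn_zero hΨ.1
    simp only [hz]
    have h0 : Φ (fun _ : Fin n => (0:ℝ)) = 0 := normOn_zero hΦ.1
    rw [h0]
    nlinarith
  by_cases hn : n = 0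
  · subst hn
    have hz : ∀ x : Fin 0 → ℝ, Φ x = 0 := fun x => by
      rw [Subsingleton.elim x 0]; exact normOn_zero hΦ.1
    rw [hz, hz, hz, hz]
    nlinarith
  -- nondegenerate case: derive σ₁, σ₂ ≥ 0
  have hσ₁ : 0 ≤ σ₁ := by
    set x : Fin m → ℝ := fun _ => 1 with hxdef
    have hxne : x ≠ 0 := by
      intro hx0
      have := congrFun hx0 ⟨0, Nat.pos_of_ne_zero hm⟩
      simp [hxdef] at this
    have hpos : 0 < Ψ x :=
      lt_of_le_of_ne (hΨ.1.1 x) (fun h => hxne (hΨ.1.2.1 x h.symm))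
    have h1 := hΨs x (-x) (1/2) (by norm_num) (by norm_num)
    have e1 : (1/2 : ℝ) • x + (1 - 1/2 : ℝ) • (-x) = 0 := by
      funext i; simp; ring
    have e2 : x - (-x) = (2:ℝ) • x := by
      funext i; simp [Pi.smul_apply, smul_eq_mul]; ring
    rw [e1, e2, normOn_zero hΨ.1, normOn_neg hΨ.1, hΨ.1.2.2.1] at h1
    rw [show |(2:ℝ)| = 2 by norm_num] at h1
    nlinarith [h1, hpos, mul_pos hpos hpos]
  have hσ₂ : 0 ≤ σ₂ := by
    set x : Fin n → ℝ := fun _ => 1 with hxdef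
    have hxne : x ≠ 0 := by
      intro hx0
      have := congrFun hx0 ⟨0, Nat.pos_of_ne_zero hn⟩
      simp [hxdef] at this
    have hpos : 0 < Φ x :=
      lt_of_le_of_ne (hΦ.1.1 x) (fun h => hxne (hΦ.1.2.1 x h.symm))
    have h1 := hΦs x (-x) (1/2) (by norm_num) (by norm_num)
    have e1 : (1/2 : ℝ) • x + (1 - 1/2 : ℝ) • (-x) = 0 := by
      funext i; simp; ring
    have e2 : x - (-x) = (2:ℝ) • x := by
      funext i; simp [Pi.smul_apply, smul_eq_mul]; ring
    rw [e1, e2, normOn_zero hΦ.1, normOn_neg hΦ.1, hΦ.1.2.2.1] at h1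
    rw [show |(2:ℝ)| = 2 by norm_num] at h1
    nlinarith [h1, hpos, mul_pos hpos hpos]
  -- main argument
  set g : (Fin n → ℝ) → ℝ := fun x => Φ (fun i => Real.sqrt |x i|) ^ 2 with hgdef
  set u : Fin n → ℝ := fun j => Ψ (fun i => A i j) with hudef
  set v : Fin n → ℝ := fun j => Ψ (fun i => B i j) with hvdef
  set d : Fin n → ℝ := fun j => Ψ (fun i => A i j - B i j) with hddef
  set w : Fin n → ℝ := fun j => Ψ (fun i => (α • A + (1 - α) • B) i j) with hwdef
  have hu0 : ∀ j, 0 ≤ u j := fun j => hΨ.1.1 _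
  have hv0 : ∀ j, 0 ≤ v j := fun j => hΨ.1.1 _
  have hd0 : ∀ j, 0 ≤ d j := fun j => hΨ.1.1 _
  have hw0 : ∀ j, 0 ≤ w j := fun j => hΨ.1.1 _
  have hα1' : 0 ≤ 1 - α := by linarith
  have hc₁ : 0 ≤ σ₁ / 2 * α * (1 - α) :=
    mul_nonneg (mul_nonneg (by linarith) hα0) hα1'
  have hc₂ : 0 ≤ σ₂ / 2 * α * (1 - α) :=
    mul_nonneg (mul_nonneg (by linarith) hα0) hα1'
  have gmono : ∀ x y : Fin n → ℝ, (∀ j, |x j| ≤ |y j|) → g x ≤ g y := by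
    intro x y hxy
    have h1 : Φ (fun i => Real.sqrt |x i|) ≤ Φ (fun i => Real.sqrt |y i|) := by
      apply absSymm_mono hΦ
      intro i
      rw [abs_of_nonneg (Real.sqrt_nonneg _), abs_of_nonneg (Real.sqrt_nonneg _)]
      exact Real.sqrt_le_sqrt (hxy i)
    simpa [hgdef] using pow_le_pow_left₀ (hΦ.1.1 _) h1 2
  have gsq : ∀ x : Fin n → ℝ, (∀ j, 0 ≤ x j) → g (fun j => x j ^ 2) = Φ x ^ 2 := by
    intro x hx
    have e : (fun i => Real.sqrt |x i ^ 2|) = x := by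
      funext i
      rw [abs_of_nonneg (sq_nonneg _), Real.sqrt_sq (hx i)]
    simp only [hgdef]
    rw [e]
  set p : Fin n → ℝ := fun j => α * u j ^ 2 + (1 - α) * v j ^ 2 with hpdef
  set z : Fin n → ℝ := fun j => w j ^ 2 with hzdef
  set q : Fin n → ℝ := fun j => d j ^ 2 with hqdef
  have hp0 : ∀ j, 0 ≤ p j := fun j => by
    have := sq_nonneg (u j); have := sq_nonneg (v j)
    simp only [hpdef]
    nlinarith
  -- column-wise smoothness of Ψ²
  have key1 : ∀ j, p j ≤ z j + σ₁ / 2 * α * (1 - α) * q j := by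
    intro j
    have h1 := hΨs (fun i => A i j) (fun i => B i j) α hα0 hα1
    have ecol : (α • (fun i => A i j) + (1 - α) • (fun i => B i j))
        = fun i => (α • A + (1 - α) • B) i j := by
      funext i
      simp [Matrix.add_apply, Matrix.smul_apply, smul_eq_mul]
    have esub : ((fun i => A i j) - fun i => B i j) = fun i => A i j - B i j := rfl
    rw [ecol, esub] at h1
    simp only [hpdef, hzdef, hqdef, hudef, hvdef, hddef, hwdef]
    linarith
  -- Step A : g p ≤ g z + c₁ * Φ d ^ 2
  have hgq : g q = Φ d ^ 2 := gsq d hd0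
  have hgz : g z = Φ w ^ 2 := gsq w hw0
  have hA : g p ≤ g z + σ₁ / 2 * α * (1 - α) * Φ d ^ 2 := by
    have h1 : g p ≤ g (z + (σ₁ / 2 * α * (1 - α)) • q) := by
      apply gmono
      intro j
      have hq0 : 0 ≤ q j := sq_nonneg _
      have hz0 : 0 ≤ z j := sq_nonneg _
      rw [abs_of_nonneg (hp0 j), abs_of_nonneg]
      · exact key1 j
      · have : 0 ≤ σ₁ / 2 * α * (1 - α) * q j := mul_nonneg hc₁ hq0
        simp only [Pi.add_apply, Pi.smul_apply, smul_eq_mul]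
        linarith
    have h2 : g (z + (σ₁ / 2 * α * (1 - α)) • q) ≤ g z + g ((σ₁ / 2 * α * (1 - α)) • q) :=
      hQ.2.2.2 z _
    have h3 : g ((σ₁ / 2 * α * (1 - α)) • q) = σ₁ / 2 * α * (1 - α) * g q := by
      rw [hQ.2.2.1, abs_of_nonneg hc₁]
    rw [h3, hgq] at h2
    linarith
  -- Step B : smoothness of Φ² plus QM-AM
  have hB1 := hΦs u v α hα0 hα1
  have hB2 : Φ (α • u + (1 - α) • v) ^ 2 ≤ g p := by
    have h1 : Φ (α • u + (1 - α) • v) ≤ Φ (fun j => Real.sqrt |p j|) := by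
      apply absSymm_mono hΦ
      intro j
      rw [abs_of_nonneg (Real.sqrt_nonneg _), abs_of_nonneg (hp0 j)]
      have h2 : |(α • u + (1 - α) • v) j| = α * u j + (1 - α) * v j := by
        simp only [Pi.add_apply, Pi.smul_apply, smul_eq_mul]
        rw [abs_of_nonneg]
        exact add_nonneg (mul_nonneg hα0 (hu0 j)) (mul_nonneg hα1' (hv0 j))
      rw [h2]
      exact amqm (hu0 j) (hv0 j) hα0 hα1
    have := pow_le_pow_left₀ (hΦ.1.1 _) h1 2
    simpa [hgdef] using this
  -- Step C : Φ(u - v) ≤ Φ d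
  have hC : Φ (u - v) ^ 2 ≤ Φ d ^ 2 := by
    have h1 : Φ (u - v) ≤ Φ d := by
      apply absSymm_mono hΦ
      intro j
      rw [abs_of_nonneg (hd0 j)]
      have esub : ((fun i => A i j) - fun i => B i j) = fun i => A i j - B i j := rfl
      have hdj : d j = Ψ (fun i => A i j - B i j) := rfl
      have huj : u j = Ψ (fun i => A i j) := rfl
      have hvj : v j = Ψ (fun i => B i j) := rfl
      have hsubj : (u - v) j = u j - v j := rfl
      rw [abs_le, hsubj, hdj, huj, hvj]
      constructor
      · have h5 := normOn_sub_le hΨ.1 (fun i => B i j) (fun i => A i j)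
        have hneg : Ψ ((fun i => B i j) - fun i => A i j) = Ψ (fun i => A i j - B i j) := by
          rw [show ((fun i => B i j) - fun i => A i j) = -((fun i => A i j) - fun i => B i j)
            from by funext i; simp, normOn_neg hΨ.1, esub]
        rw [hneg] at h5
        linarith
      · have h5 := normOn_sub_le hΨ.1 (fun i => A i j) (fun i => B i j)
        rw [esub] at h5
        linarith
    exact pow_le_pow_left₀ (hΦ.1.1 _) h1 2
  have hCmul : σ₂ / 2 * α * (1 - α) * Φ (u - v) ^ 2 ≤ σ₂ / 2 * α * (1 - α) * Φ d ^ 2 :=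
    mul_le_mul_of_nonneg_left hC hc₂
  -- combine
  show α * Φ u ^ 2 + (1 - α) * Φ v ^ 2
      - (σ₁ + σ₂) / 2 * α * (1 - α) * Φ d ^ 2 ≤ Φ w ^ 2
  rw [← hgz]
  nlinarith [hB1, hB2, hA, hCmul]
end
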